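/- arXiv:1706.09040 — 11 statements merged into one kernel-verified Lean document; each statement's English description precedes it below -/
import Mathlib

section
/- Let φ, f : I → ℝ be functions such that φ is constant on the set ½(Z_f^c + I) = {(u+v)/2 : u ∈ Z_f^c, v ∈ I}. Then the pair (φ, f) solves the functional equation φ((x+y)/2)(f(x)+f(y)) = φ(x)f(x) + φ(y)f(y) for all x, y ∈ I. -/
/-- Let `φ, f : I → ℝ` be functions such that `φ` is constant on the set
`½(Z_f^c + I) = {(u+v)/2 : u ∈ Z_f^c, v ∈ I}`, where `Z_f^c = I \ Z_f` and
`Z_f = {x ∈ I | f x = 0}`.  Then `(φ, f)` solves the functional equation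
`φ((x+y)/2)(f(x)+f(y)) = φ(x)f(x) + φ(y)f(y)` for all `x, y ∈ I`. -/
theorem stmt0 (I : Set ℝ) (hIopen : IsOpen I) (hIconn : I.OrdConnected)
    (hIne : I.Nonempty) (φ f : ℝ → ℝ)
    (hconst : ∃ c : ℝ, ∀ u ∈ I \ {x ∈ I | f x = 0}, ∀ v ∈ I, φ ((u + v) / 2) = c) :
    ∀ x ∈ I, ∀ y ∈ I,
      φ ((x + y) / 2) * (f x + f y) = φ x * f x + φ y * f y := by
  obtain ⟨c, hc⟩ := hconst
  intro x hx y hy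
  have key : ∀ u ∈ I, f u ≠ 0 → ∀ v ∈ I, φ ((u + v) / 2) = c := fun u hu hfu v hv =>
    hc u ⟨hu, fun h => hfu h.2⟩ v hv
  have self : ∀ u ∈ I, f u ≠ 0 → φ u = c := by
    intro u hu hfu
    have := key u hu hfu u hu
    simpa using this
  by_cases hfx : f x = 0
  · by_cases hfy : f y = 0
    · simp [hfx, hfy]
    · have h1 : φ ((x + y) / 2) = c := by
        have := key y hy hfy x hx
        rwa [add_comm y x] at this
      rw [h1, self y hy hfy, hfx]
      ring
  · by_cases hfy : f y = 0
    · rw [key x hx hfx y hy, self x hx hfx, hfy]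
      ring
    · rw [key x hx hfx y hy, self x hx hfx, self y hy hfy]
      ring
end

section
/- Let A, B ⊆ I be subsets such that A ⊆ B ⊆ cl(conv(A)), where conv(A) is the convex hull of A and cl denotes closure. Then A + I = B + I. -/
open Pointwise

lemma between_of_mem_convexHull {A : Set ℝ} {x : ℝ} (hx : x ∈ convexHull ℝ A) :
    ∃ a ∈ A, ∃ b ∈ A, a ≤ x ∧ x ≤ b := by
  have hS : Convex ℝ {x : ℝ | ∃ a ∈ A, ∃ b ∈ A, a ≤ x ∧ x ≤ b} := by
    have : Set.OrdConnected {x : ℝ | ∃ a ∈ A, ∃ b ∈ A, a ≤ x ∧ x ≤ b} := by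
      constructor
      rintro u ⟨a, ha, b, hb, hau, _⟩ v ⟨a', ha', b', hb', _, hvb'⟩ z ⟨hz1, hz2⟩
      exact ⟨a, ha, b', hb', hau.trans hz1, hz2.trans hvb'⟩
    exact this.convex
  refine convexHull_min ?_ hS hx
  intro a ha
  exact ⟨a, ha, a, ha, le_refl a, le_refl a⟩

lemma key_lemma {I : Set ℝ} (hIconn : I.OrdConnected) {A : Set ℝ} (hAI : A ⊆ I)
    {x t : ℝ} (hx : x ∈ convexHull ℝ A) (ht : t ∈ I) : x + t ∈ A + I := by
  obtain ⟨a, ha, b, hb, hax, hxb⟩ := between_of_mem_convexHull hx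
  by_cases h : x + t - a ∈ I
  · exact ⟨a, ha, x + t - a, h, by ring⟩
  · -- then every element of I is ≤ x + t - a, in particular b
    have hb' : b ≤ x + t - a := by
      by_contra hcon
      push_neg at hcon
      exact h (hIconn.out ht (hAI hb) ⟨by linarith, hcon.le⟩)
    refine ⟨b, hb, x + t - b, hIconn.out (hAI ha) ht ⟨by linarith, by linarith⟩, by ring⟩

/-- Let `A, B ⊆ I` be subsets of the nonempty open interval `I` such that
`A ⊆ B ⊆ cl(conv(A))`.  Then `A + I = B + I`. -/
theorem stmt2 (I : Set ℝ) (hIopen : IsOpen I) (hIconn : I.OrdConnected)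
    (hIne : I.Nonempty) (A B : Set ℝ) (hAI : A ⊆ I) (hBI : B ⊆ I)
    (hAB : A ⊆ B) (hBconv : B ⊆ closure (convexHull ℝ A)) :
    A + I = B + I := by
  apply Set.Subset.antisymm
  · exact Set.add_subset_add_right hAB
  · rintro z ⟨b, hb, t, ht, rfl⟩
    obtain ⟨ε, hε, hball⟩ := Metric.isOpen_iff.mp hIopen t ht
    obtain ⟨x, hx, hxb⟩ := Metric.mem_closure_iff.mp (hBconv hb) ε hε
    have ht' : t + b - x ∈ I := by
      apply hball
      simp only [Metric.mem_ball, Real.dist_eq]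
      have : |t + b - x - t| = |x - b| := by rw [abs_sub_comm]; ring_nf
      rw [this]
      rwa [Real.dist_eq, abs_sub_comm] at hxb
    have := key_lemma hIconn hAI hx ht'
    have heq : x + (t + b - x) = b + t := by ring
    rwa [heq] at this
end

section
/- If a pair of functions φ, f : I → ℝ solves the functional equation φ((x+y)/2)(f(x)+f(y)) = φ(x)f(x) + φ(y)f(y) for all x, y ∈ I, and φ is continuous on I, then for every x in the closure of Z_f relative to I and every y ∈ Z_f^c one has φ(y) = φ((x+y)/2). -/
/-- If a pair of functions `φ, f : I → ℝ` solves the functional equation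
`φ((x+y)/2)(f(x)+f(y)) = φ(x)f(x) + φ(y)f(y)` for all `x, y ∈ I`, and `φ` is continuous
on `I`, then for every `x` in the closure of `Z_f` relative to `I` and every `y ∈ Z_f^c`
one has `φ(y) = φ((x+y)/2)`. -/
theorem stmt4 (I : Set ℝ) (hIopen : IsOpen I) (hIconn : I.OrdConnected)
    (hIne : I.Nonempty) (φ f : ℝ → ℝ)
    (heq : ∀ x ∈ I, ∀ y ∈ I,
      φ ((x + y) / 2) * (f x + f y) = φ x * f x + φ y * f y)
    (hφ : ContinuousOn φ I) :
    ∀ x ∈ closure {z ∈ I | f z = 0} ∩ I, ∀ y ∈ I, f y ≠ 0 →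
      φ y = φ ((x + y) / 2) := by
  rintro x ⟨hxcl, hxI⟩ y hyI hfy
  set S : Set ℝ := {z ∈ I | f z = 0} with hS
  have hconv : Convex ℝ I := hIconn.convex
  -- midpoint map
  set g : ℝ → ℝ := fun z => φ ((z + y) / 2) with hg
  have hmid : ∀ z ∈ I, (z + y) / 2 ∈ I := by
    intro z hz
    have := hconv hz hyI (by norm_num : (0:ℝ) ≤ 1/2) (by norm_num : (0:ℝ) ≤ 1/2)
      (by norm_num)
    have e : (1/2:ℝ) • z + (1/2:ℝ) • y = (z + y) / 2 := by
      simp [smul_eq_mul]; ring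
    rwa [e] at this
  -- g is constant φ y on S
  have hconst : ∀ z ∈ S, g z = φ y := by
    intro z hz
    have h := heq z hz.1 y hyI
    rw [hz.2] at h
    simp only [zero_add, mul_zero] at h
    exact mul_right_cancel₀ hfy h
  -- g is continuous at x
  have hcg : ContinuousAt g x := by
    have h1 : ContinuousAt φ ((x + y) / 2) :=
      hφ.continuousAt (hIopen.mem_nhds (hmid x hxI))
    have hm : ContinuousAt (fun z : ℝ => (z + y) / 2) x :=
      (continuousAt_id.add continuousAt_const).div_const 2
    exact ContinuousAt.comp h1 hm
  -- x ∈ closure S, nontrivial filter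
  have hne : (nhdsWithin x S).NeBot := mem_closure_iff_nhdsWithin_neBot.mp hxcl
  have h1 : Filter.Tendsto g (nhdsWithin x S) (nhds (g x)) :=
    hcg.continuousWithinAt
  have h2 : Filter.Tendsto g (nhdsWithin x S) (nhds (φ y)) := by
    refine Filter.Tendsto.congr' ?_ tendsto_const_nhds
    filter_upwards [self_mem_nhdsWithin] with z hz using (hconst z hz).symm
  have : g x = φ y := tendsto_nhds_unique h1 h2
  simpa [hg] using this.symm
end

section
/- If the pair of functions φ, f : I → ℝ solves the functional equation φ((x+y)/2)(f(x)+f(y)) = φ(x)f(x) + φ(y)f(y) for all x, y ∈ I, φ is continuous on I, and Z_f is nonempty, then φ is constant on the set ½((cl̄ Z_f)^c + I), where cl̄ Z_f denotes the closure of Z_f relative to I and (cl̄ Z_f)^c := I \ cl̄ Z_f. -/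
open Set Filter Topology

private lemma lim_helper {g : ℝ → ℝ} {I A : Set ℝ} (hg : ContinuousOn g I) (hA : A ⊆ I)
    {c t : ℝ} (hval : ∀ a ∈ A, g a = c) (ht : t ∈ I) (htc : t ∈ closure A) : g t = c := by
  have h1 : ContinuousWithinAt g A t := (hg t ht).mono hA
  have hne : (𝓝[A] t).NeBot := mem_closure_iff_nhdsWithin_neBot.mp htc
  have h2 : Tendsto g (𝓝[A] t) (𝓝 (g t)) := h1.tendsto
  have h3 : Tendsto g (𝓝[A] t) (𝓝 c) := by
    refine Tendsto.congr' ?_ tendsto_const_nhds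
    filter_upwards [self_mem_nhdsWithin] with a ha using (hval a ha).symm
  exact tendsto_nhds_unique h2 h3

private lemma mid_mem {I : Set ℝ} (hIconn : I.OrdConnected) {x y : ℝ}
    (hx : x ∈ I) (hy : y ∈ I) : (x + y) / 2 ∈ I := by
  rcases le_total x y with h | h
  · exact hIconn.out hx hy ⟨by linarith, by linarith⟩
  · exact hIconn.out hy hx ⟨by linarith, by linarith⟩

private lemma fnz {I : Set ℝ} {f : ℝ → ℝ} {x : ℝ} (hx : x ∈ I)
    (hxc : x ∉ closure {z : ℝ | z ∈ I ∧ f z = 0}) : f x ≠ 0 :=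
  fun h => hxc (subset_closure ⟨hx, h⟩)

private lemma lemA (I : Set ℝ) (φ f : ℝ → ℝ)
    (heq : ∀ x ∈ I, ∀ y ∈ I, φ ((x + y) / 2) * (f x + f y) = φ x * f x + φ y * f y)
    {x z : ℝ} (hx : x ∈ I) (hfx : f x ≠ 0) (hz : z ∈ I) (hfz : f z = 0) :
    φ ((x + z) / 2) = φ x := by
  have h := heq x hx z hz
  rw [hfz] at h
  simp only [add_zero, mul_zero] at h
  exact mul_right_cancel₀ hfx h

private lemma lemB (I : Set ℝ) (hIconn : I.OrdConnected) (φ f : ℝ → ℝ)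
    (heq : ∀ x ∈ I, ∀ y ∈ I, φ ((x + y) / 2) * (f x + f y) = φ x * f x + φ y * f y)
    (hφ : ContinuousOn φ I)
    {x z : ℝ} (hx : x ∈ I) (hfx : f x ≠ 0) (hz : z ∈ I)
    (hzc : z ∈ closure {w : ℝ | w ∈ I ∧ f w = 0}) :
    φ ((x + z) / 2) = φ x := by
  have hg : ContinuousOn (fun w => φ ((x + w) / 2)) I := by
    apply hφ.comp
    · exact Continuous.continuousOn (by continuity)
    · exact fun w hw => mid_mem hIconn hx hw
  exact lim_helper hg (fun a ha => ha.1)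
    (fun a ha => lemA I φ f heq hx hfx ha.1 ha.2) hz hzc

private lemma lemC (I : Set ℝ) (hIconn : I.OrdConnected) (φ f : ℝ → ℝ)
    (heq : ∀ x ∈ I, ∀ y ∈ I, φ ((x + y) / 2) * (f x + f y) = φ x * f x + φ y * f y)
    (hφ : ContinuousOn φ I) {x z : ℝ}
    (hz : z ∈ I) (hzc : z ∈ closure {w : ℝ | w ∈ I ∧ f w = 0})
    (hx : x ∈ I) (hfx : f x ≠ 0)
    (hbet : ∀ w, w ∈ I → min x z < w → w < max x z → f w ≠ 0) :
    φ x = φ z := by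
  rcases eq_or_ne x z with rfl | hne
  · rfl
  set X : ℕ → ℝ := fun n => z + (x - z) / 2 ^ n with hX
  have hX0 : X 0 = x := by simp [hX]
  have hpow : ∀ n : ℕ, (0:ℝ) < 2 ^ n := fun n => by positivity
  have hXeq : ∀ n, X n = z + (x - z) * (1/2^n : ℝ) := by
    intro n; rw [hX]; ring_nf
  have hbt : ∀ n : ℕ, 1 ≤ n → min x z < X n ∧ X n < max x z := by
    intro n hn
    have h2 : (2:ℝ) ≤ 2 ^ n := by
      calc (2:ℝ) = 2 ^ 1 := (pow_one 2).symm
      _ ≤ 2 ^ n := pow_le_pow_right₀ (by norm_num) hn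
    have k2 : (1:ℝ)/2^n ≤ 1/2 := one_div_le_one_div_of_le (by norm_num) h2
    have k3 : (0:ℝ) < 1/2^n := by positivity
    rcases lt_or_gt_of_ne hne with hlt | hgt
    · -- x < z, d := x - z < 0
      have hd : x - z < 0 := by linarith
      have e2 : (x - z) * ((1:ℝ)/2) ≤ (x - z) * (1/2^n) :=
        mul_le_mul_of_nonpos_left k2 hd.le
      constructor
      · rw [min_eq_left hlt.le, hXeq n]
        nlinarith
      · rw [max_eq_right hlt.le, hXeq n]
        nlinarith
    · -- z < x, d > 0
      have hd : 0 < x - z := by linarith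
      have e2 : (x - z) * (1/2^n) ≤ (x - z) * ((1:ℝ)/2) :=
        mul_le_mul_of_nonneg_left k2 hd.le
      constructor
      · rw [min_eq_right hgt.le, hXeq n]
        nlinarith
      · rw [max_eq_left hgt.le, hXeq n]
        nlinarith
  have hmem : ∀ n, X n ∈ I := by
    intro n
    rcases Nat.eq_zero_or_pos n with h0 | h1
    · rw [h0, hX0]; exact hx
    · obtain ⟨h1', h2'⟩ := hbt n h1
      rcases le_total x z with h | h
      · refine hIconn.out hx hz ⟨?_, ?_⟩
        · rw [min_eq_left h] at h1'; linarith
        · rw [max_eq_right h] at h2'; linarith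
      · refine hIconn.out hz hx ⟨?_, ?_⟩
        · rw [min_eq_right h] at h1'; linarith
        · rw [max_eq_left h] at h2'; linarith
  have hfX : ∀ n, f (X n) ≠ 0 := by
    intro n
    rcases Nat.eq_zero_or_pos n with h0 | h1
    · rw [h0, hX0]; exact hfx
    · exact hbet (X n) (hmem n) (hbt n h1).1 (hbt n h1).2
  have hstep : ∀ n, φ (X (n+1)) = φ (X n) := by
    intro n
    have h2n : (2:ℝ)^n ≠ 0 := ne_of_gt (hpow n)
    have hmid : (X n + z)/2 = X (n+1) := by
      rw [hX]; simp only; rw [pow_succ]; field_simp; ring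
    rw [← hmid]
    exact lemB I hIconn φ f heq hφ (hmem n) (hfX n) hz hzc
  have hconst : ∀ n, φ (X n) = φ x := by
    intro n
    induction n with
    | zero => rw [hX0]
    | succ k ih => rw [hstep k, ih]
  have hXeq2 : ∀ n, X n = z + (x - z) * (1/2:ℝ)^n := by
    intro n
    rw [hXeq n, div_pow, one_pow]
  have hlim : Tendsto X atTop (𝓝 z) := by
    have h0 : Tendsto (fun n : ℕ => (x - z) * (1/2:ℝ)^n) atTop (𝓝 0) := by
      have := (tendsto_pow_atTop_nhds_zero_of_lt_one
        (by norm_num : (0:ℝ) ≤ 1/2) (by norm_num : (1/2:ℝ) < 1)).const_mul (x - z)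
      simpa using this
    have h1 : Tendsto (fun n : ℕ => z + (x - z) * (1/2:ℝ)^n) atTop (𝓝 z) := by
      simpa using tendsto_const_nhds.add h0
    exact h1.congr (fun n => (hXeq2 n).symm)
  have hφlim : Tendsto (fun n => φ (X n)) atTop (𝓝 (φ z)) := by
    apply (hφ z hz).tendsto.comp
    rw [tendsto_nhdsWithin_iff]
    exact ⟨hlim, Eventually.of_forall hmem⟩
  have hφlim2 : Tendsto (fun n => φ (X n)) atTop (𝓝 (φ x)) :=
    Tendsto.congr (fun n => (hconst n).symm) tendsto_const_nhds
  exact tendsto_nhds_unique hφlim2 hφlim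

private lemma gap_aux (I : Set ℝ) (hIconn : I.OrdConnected) (φ f : ℝ → ℝ)
    (heq : ∀ x ∈ I, ∀ y ∈ I, φ ((x + y) / 2) * (f x + f y) = φ x * f x + φ y * f y)
    (hφ : ContinuousOn φ I)
    {z₀ : ℝ} (hz₀I : z₀ ∈ I) (hz₀f : f z₀ = 0)
    {x y : ℝ} (hx : x ∈ I) (hy : y ∈ I)
    (hxc : x ∉ closure {z : ℝ | z ∈ I ∧ f z = 0})
    (hyc : y ∉ closure {z : ℝ | z ∈ I ∧ f z = 0})
    (hxy : x < y)
    (hgap : ∀ w, w ∈ I → x < w → w < y → w ∉ closure {z : ℝ | z ∈ I ∧ f z = 0}) :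
    φ x = φ y := by
  by_cases hB : ∃ w, w ∈ I ∧ w ∈ closure {z : ℝ | z ∈ I ∧ f z = 0} ∧ y ≤ w
  · obtain ⟨w₀, hw₀I, hw₀c, hw₀y⟩ := hB
    have hsc : IsClosed (closure {z : ℝ | z ∈ I ∧ f z = 0} ∩ Icc y w₀) :=
      isClosed_closure.inter isClosed_Icc
    have hsne : (closure {z : ℝ | z ∈ I ∧ f z = 0} ∩ Icc y w₀).Nonempty :=
      ⟨w₀, hw₀c, hw₀y, le_refl _⟩
    have hsbdd : BddBelow (closure {z : ℝ | z ∈ I ∧ f z = 0} ∩ Icc y w₀) :=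
      ⟨y, fun a ha => ha.2.1⟩
    set b := sInf (closure {z : ℝ | z ∈ I ∧ f z = 0} ∩ Icc y w₀) with hbdef
    have hbmem := hsc.csInf_mem hsne hsbdd
    have hbI : b ∈ I := hIconn.out hy hw₀I ⟨hbmem.2.1, hbmem.2.2⟩
    have hyb : y < b := lt_of_le_of_ne hbmem.2.1 (fun h => hyc (by rw [h]; exact hbmem.1))
    have hbmin : ∀ w, w ∈ I → w ∈ closure {z : ℝ | z ∈ I ∧ f z = 0} → y ≤ w → b ≤ w := by
      intro w hwI hwc hwy
      by_cases hww : w ≤ w₀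
      · exact csInf_le hsbdd ⟨hwc, hwy, hww⟩
      · exact le_trans hbmem.2.2 (le_of_not_ge hww)
    have h1 : φ x = φ b := by
      apply lemC I hIconn φ f heq hφ hbI hbmem.1 hx (fnz hx hxc)
      intro w hwI hw1 hw2
      rw [min_eq_left (le_of_lt (lt_trans hxy hyb))] at hw1
      rw [max_eq_right (le_of_lt (lt_trans hxy hyb))] at hw2
      intro hf0
      have hwc : w ∈ closure {z : ℝ | z ∈ I ∧ f z = 0} := subset_closure ⟨hwI, hf0⟩
      rcases lt_trichotomy w y with h | h | h
      · exact hgap w hwI hw1 h hwc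
      · exact hyc (by rw [← h]; exact hwc)
      · exact absurd (hbmin w hwI hwc h.le) (not_le.mpr hw2)
    have h2 : φ y = φ b := by
      apply lemC I hIconn φ f heq hφ hbI hbmem.1 hy (fnz hy hyc)
      intro w hwI hw1 hw2
      rw [min_eq_left hyb.le] at hw1
      rw [max_eq_right hyb.le] at hw2
      intro hf0
      exact absurd (hbmin w hwI (subset_closure ⟨hwI, hf0⟩) hw1.le) (not_le.mpr hw2)
    rw [h1, h2]
  · push_neg at hB
    have hz₀c : z₀ ∈ closure {z : ℝ | z ∈ I ∧ f z = 0} := subset_closure ⟨hz₀I, hz₀f⟩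
    have hz₀y : z₀ < y := hB z₀ hz₀I hz₀c
    have hz₀x : z₀ < x := by
      by_contra hcon
      push_neg at hcon
      rcases eq_or_lt_of_le hcon with h | h
      · exact hxc (by rw [h]; exact hz₀c)
      · exact hgap z₀ hz₀I h hz₀y hz₀c
    have hsc : IsClosed (closure {z : ℝ | z ∈ I ∧ f z = 0} ∩ Icc z₀ x) :=
      isClosed_closure.inter isClosed_Icc
    have hsne : (closure {z : ℝ | z ∈ I ∧ f z = 0} ∩ Icc z₀ x).Nonempty :=
      ⟨z₀, hz₀c, le_refl _, hz₀x.le⟩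
    have hsbdd : BddAbove (closure {z : ℝ | z ∈ I ∧ f z = 0} ∩ Icc z₀ x) :=
      ⟨x, fun a ha => ha.2.2⟩
    set a := sSup (closure {z : ℝ | z ∈ I ∧ f z = 0} ∩ Icc z₀ x) with hadef
    have hamem := hsc.csSup_mem hsne hsbdd
    have haI : a ∈ I := hIconn.out hz₀I hx ⟨hamem.2.1, hamem.2.2⟩
    have hax : a < x := lt_of_le_of_ne hamem.2.2 (fun h => hxc (by rw [← h]; exact hamem.1))
    have hamax : ∀ w, w ∈ I → w ∈ closure {z : ℝ | z ∈ I ∧ f z = 0} → w ≤ x → w ≤ a := by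
      intro w hwI hwc hwx
      by_cases h : z₀ ≤ w
      · exact le_csSup hsbdd ⟨hwc, h, hwx⟩
      · exact le_trans (le_of_not_ge h) hamem.2.1
    have h1 : φ x = φ a := by
      apply lemC I hIconn φ f heq hφ haI hamem.1 hx (fnz hx hxc)
      intro w hwI hw1 hw2
      rw [min_eq_right hax.le] at hw1
      rw [max_eq_left hax.le] at hw2
      intro hf0
      exact absurd (hamax w hwI (subset_closure ⟨hwI, hf0⟩) hw2.le) (not_le.mpr hw1)
    have h2 : φ y = φ a := by
      apply lemC I hIconn φ f heq hφ haI hamem.1 hy (fnz hy hyc)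
      intro w hwI hw1 hw2
      rw [min_eq_right (le_of_lt (lt_trans hax hxy))] at hw1
      rw [max_eq_left (le_of_lt (lt_trans hax hxy))] at hw2
      intro hf0
      have hwc : w ∈ closure {z : ℝ | z ∈ I ∧ f z = 0} := subset_closure ⟨hwI, hf0⟩
      rcases le_or_gt w x with h | h
      · exact absurd (hamax w hwI hwc h) (not_le.mpr hw1)
      · exact hgap w hwI h hw2 hwc
    rw [h1, h2]

private lemma gapconst (I : Set ℝ) (hIconn : I.OrdConnected) (φ f : ℝ → ℝ)
    (heq : ∀ x ∈ I, ∀ y ∈ I, φ ((x + y) / 2) * (f x + f y) = φ x * f x + φ y * f y)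
    (hφ : ContinuousOn φ I)
    {z₀ : ℝ} (hz₀I : z₀ ∈ I) (hz₀f : f z₀ = 0)
    {x y : ℝ} (hx : x ∈ I) (hy : y ∈ I)
    (hxc : x ∉ closure {z : ℝ | z ∈ I ∧ f z = 0})
    (hyc : y ∉ closure {z : ℝ | z ∈ I ∧ f z = 0})
    (hgap : ∀ w, w ∈ I → min x y < w → w < max x y →
      w ∉ closure {z : ℝ | z ∈ I ∧ f z = 0}) :
    φ x = φ y := by
  rcases lt_trichotomy x y with h | h | h
  · refine gap_aux I hIconn φ f heq hφ hz₀I hz₀f hx hy hxc hyc h ?_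
    intro w hwI h1 h2
    exact hgap w hwI (by rw [min_eq_left h.le]; exact h1) (by rw [max_eq_right h.le]; exact h2)
  · rw [h]
  · refine (gap_aux I hIconn φ f heq hφ hz₀I hz₀f hy hx hyc hxc h ?_).symm
    intro w hwI h1 h2
    exact hgap w hwI (by rw [min_eq_right h.le]; exact h1) (by rw [max_eq_left h.le]; exact h2)

private lemma midlem (I : Set ℝ) (hIconn : I.OrdConnected) (φ f : ℝ → ℝ)
    (heq : ∀ x ∈ I, ∀ y ∈ I, φ ((x + y) / 2) * (f x + f y) = φ x * f x + φ y * f y)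
    (hφ : ContinuousOn φ I)
    {z₀ : ℝ} (hz₀I : z₀ ∈ I) (hz₀f : f z₀ = 0)
    {u v : ℝ} (hu : u ∈ I) (hv : v ∈ I) (huv : u < v)
    (hucl : u ∉ closure {z : ℝ | z ∈ I ∧ f z = 0})
    (hvcl : v ∉ closure {z : ℝ | z ∈ I ∧ f z = 0})
    (hφv : φ v = φ u)
    {zb : ℝ} (hzbI : zb ∈ I) (hzbc : zb ∈ closure {z : ℝ | z ∈ I ∧ f z = 0})
    (hzb1 : u < zb) (hzb2 : zb < v) :
    φ ((u + v) / 2) = φ u ∨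
      ∃ p q : ℝ, p ∈ I ∧ p ∈ closure {z : ℝ | z ∈ I ∧ f z = 0} ∧
        q ∈ I ∧ q ∈ closure {z : ℝ | z ∈ I ∧ f z = 0} ∧ p + q = u + v ∧
        p < v ∧ u < q ∧
        (∀ w, w ∈ I → w ∈ closure {z : ℝ | z ∈ I ∧ f z = 0} → w ≤ v → w ≤ p) ∧
        (∀ w, w ∈ I → w ∈ closure {z : ℝ | z ∈ I ∧ f z = 0} → u ≤ w → q ≤ w) := by
  have hsc : IsClosed (closure {z : ℝ | z ∈ I ∧ f z = 0} ∩ Icc zb v) :=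
    isClosed_closure.inter isClosed_Icc
  have hsne : (closure {z : ℝ | z ∈ I ∧ f z = 0} ∩ Icc zb v).Nonempty :=
    ⟨zb, hzbc, le_refl _, hzb2.le⟩
  have hsbdd : BddAbove (closure {z : ℝ | z ∈ I ∧ f z = 0} ∩ Icc zb v) :=
    ⟨v, fun a ha => ha.2.2⟩
  set a := sSup (closure {z : ℝ | z ∈ I ∧ f z = 0} ∩ Icc zb v) with hadef
  have hamem := hsc.csSup_mem hsne hsbdd
  have haI : a ∈ I := hIconn.out hzbI hv ⟨hamem.2.1, hamem.2.2⟩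
  have hav : a < v := lt_of_le_of_ne hamem.2.2 (fun h => hvcl (by rw [← h]; exact hamem.1))
  have hua : u < a := lt_of_lt_of_le hzb1 hamem.2.1
  have hamax : ∀ w, w ∈ I → w ∈ closure {z : ℝ | z ∈ I ∧ f z = 0} → w ≤ v → w ≤ a := by
    intro w hwI hwc hwv
    by_cases h : zb ≤ w
    · exact le_csSup hsbdd ⟨hwc, h, hwv⟩
    · exact le_trans (le_of_not_ge h) hamem.2.1
  have hKv : ∀ y, a < y → y ≤ v → y ∈ I ∧
      y ∉ closure {z : ℝ | z ∈ I ∧ f z = 0} ∧ φ y = φ u := by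
    intro y h1 h2
    have hyI : y ∈ I := hIconn.out haI hv ⟨h1.le, h2⟩
    have hycl : y ∉ closure {z : ℝ | z ∈ I ∧ f z = 0} :=
      fun hc => absurd (hamax y hyI hc h2) (not_le.mpr h1)
    refine ⟨hyI, hycl, ?_⟩
    rcases eq_or_lt_of_le h2 with h | h
    · rw [h]; exact hφv
    · have hyv : φ y = φ v := by
        apply gap_aux I hIconn φ f heq hφ hz₀I hz₀f hyI hv hycl hvcl h
        intro w hwI hw1 hw2
        exact fun hc => absurd (hamax w hwI hc hw2.le) (not_le.mpr (lt_trans h1 hw1))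
      rw [hyv, hφv]
  set xs := u + v - a with hxs
  have hxsu : u < xs := by rw [hxs]; linarith
  have hxsv : xs < v := by rw [hxs]; linarith
  have hxsI : xs ∈ I := hIconn.out hu hv ⟨hxsu.le, hxsv.le⟩
  by_cases hα : ∃ x, u ≤ x ∧ x < xs ∧ x ∈ closure {z : ℝ | z ∈ I ∧ f z = 0}
  · obtain ⟨x, hx1, hx2, hxc⟩ := hα
    have hxI : x ∈ I := hIconn.out hu hxsI ⟨hx1, hx2.le⟩
    have hy := hKv (u + v - x) (by rw [hxs] at hx2; linarith) (by linarith)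
    left
    have hBB := lemB I hIconn φ f heq hφ hy.1 (fnz hy.1 hy.2.1) hxI hxc
    have hmid : ((u + v - x) + x)/2 = (u + v)/2 := by ring
    rw [hmid] at hBB
    rw [hBB]
    exact hy.2.2
  · push_neg at hα
    by_cases hfxs : f xs = 0
    · right
      refine ⟨a, xs, haI, hamem.1, hxsI, subset_closure ⟨hxsI, hfxs⟩,
        by rw [hxs]; ring, hav, hxsu, hamax, ?_⟩
      intro w hwI hwc hwu
      by_contra hcon
      push_neg at hcon
      exact hα w hwu hcon hwc
    · left
      have hφxs : φ xs = φ u := by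
        have hIco : Ico u xs ⊆ I := fun w hw => hIconn.out hu hxsI ⟨hw.1, hw.2.le⟩
        have hval : ∀ w ∈ Ico u xs, φ w = φ u := by
          intro w hw
          rcases eq_or_lt_of_le hw.1 with h | h
          · rw [← h]
          · have hwcl := hα w hw.1 hw.2
            have := gap_aux I hIconn φ f heq hφ hz₀I hz₀f hu (hIco hw) hucl hwcl h
              (fun t htI ht1 ht2 => hα t ht1.le (lt_trans ht2 hw.2))
            exact this.symm
        exact lim_helper hφ hIco hval hxsI
          (by rw [closure_Ico (ne_of_lt hxsu)]; exact ⟨hxsu.le, le_rfl⟩)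
      have hBB := lemB I hIconn φ f heq hφ hxsI hfxs haI hamem.1
      have hmid : (xs + a)/2 = (u + v)/2 := by rw [hxs]; ring
      rw [hmid] at hBB
      rw [hBB]
      exact hφxs

private lemma sweep (I : Set ℝ) (hIopen : IsOpen I) (hIconn : I.OrdConnected) (φ f : ℝ → ℝ)
    (heq : ∀ x ∈ I, ∀ y ∈ I, φ ((x + y) / 2) * (f x + f y) = φ x * f x + φ y * f y)
    (hφ : ContinuousOn φ I) {z₀ : ℝ} (hz₀I : z₀ ∈ I) (hz₀f : f z₀ = 0)
    {u : ℝ} (hu : u ∈ I) (hucl : u ∉ closure {z : ℝ | z ∈ I ∧ f z = 0}) :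
    ∀ v ∈ I, z₀ ≤ v → φ ((u + v) / 2) = φ u := by
  intro v₀ hv₀I hv₀z
  by_contra hbad
  set E := {v : ℝ | v ∈ I ∧ z₀ ≤ v ∧ φ ((u + v) / 2) ≠ φ u} with hE
  have hv₀E : v₀ ∈ E := ⟨hv₀I, hv₀z, hbad⟩
  have hEne : E.Nonempty := ⟨v₀, hv₀E⟩
  have hbdd : BddBelow E := ⟨z₀, fun e he => he.2.1⟩
  set tb := sInf E with htb
  have htbz : z₀ ≤ tb := le_csInf hEne (fun e he => he.2.1)
  have htbv₀ : tb ≤ v₀ := csInf_le hbdd hv₀E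
  have htbI : tb ∈ I := hIconn.out hz₀I hv₀I ⟨htbz, htbv₀⟩
  have hfu : f u ≠ 0 := fnz hu hucl
  have hg : ContinuousOn (fun w => φ ((u + w) / 2)) I :=
    hφ.comp (Continuous.continuousOn (by continuity)) (fun w hw => mid_mem hIconn hu hw)
  have hGlow : ∀ w, w ∈ I → z₀ ≤ w → w < tb → φ ((u + w) / 2) = φ u := by
    intro w hwI hwz hwtb
    by_contra h
    exact absurd (csInf_le hbdd ⟨hwI, hwz, h⟩) (not_le.mpr hwtb)
  have hSt : φ ((u + tb) / 2) = φ u := by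
    rcases eq_or_lt_of_le htbz with h | h
    · rw [← h]; exact lemA I φ f heq hu hfu hz₀I hz₀f
    · have hIco : Ico z₀ tb ⊆ I := fun w hw => hIconn.out hz₀I htbI ⟨hw.1, hw.2.le⟩
      exact lim_helper hg hIco (fun w hw => hGlow w (hIco hw) hw.1 hw.2) htbI
        (by rw [closure_Ico (ne_of_lt h)]; exact ⟨h.le, le_rfl⟩)
  have hfin : ∀ (BAD : ℝ → Prop) (ε : ℝ), 0 < ε →
      (∀ w, w ∈ I → tb < w → w < tb + ε → φ ((u + w) / 2) = φ u ∨ BAD w) →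
      (∀ w₁ w₂, w₁ ∈ I → tb < w₁ → w₁ < tb + ε → BAD w₁ →
        w₂ ∈ I → tb < w₂ → w₂ < tb + ε → BAD w₂ → w₁ = w₂) → False := by
    intro BAD ε hε hW hUniq
    obtain ⟨e₁, he₁E, he₁lt⟩ := exists_lt_of_csInf_lt hEne (by linarith : sInf E < tb + ε)
    obtain ⟨he₁I, he₁z, he₁bad⟩ := he₁E
    have htle : tb ≤ e₁ := csInf_le hbdd ⟨he₁I, he₁z, he₁bad⟩
    have htlt : tb < e₁ := lt_of_le_of_ne htle (fun h => he₁bad (by rw [← h]; exact hSt))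
    have hBR : BAD e₁ := (hW e₁ he₁I htlt he₁lt).resolve_left he₁bad
    have hIoo : Ioo tb e₁ ⊆ I := fun w hw => hIconn.out htbI he₁I ⟨hw.1.le, hw.2.le⟩
    have hall : ∀ w ∈ Ioo tb e₁, φ ((u + w) / 2) = φ u := by
      intro w hw
      rcases hW w (hIoo hw) hw.1 (by linarith [hw.2]) with h | h
      · exact h
      · exact absurd (hUniq w e₁ (hIoo hw) hw.1 (by linarith [hw.2]) h he₁I htlt he₁lt hBR)
          (ne_of_lt hw.2)
    exact he₁bad (lim_helper hg hIoo hall he₁I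
      (by rw [closure_Ioo (ne_of_lt htlt)]; exact ⟨htlt.le, le_rfl⟩))
  by_cases htc : tb ∈ closure {z : ℝ | z ∈ I ∧ f z = 0}
  · obtain ⟨δ, hδ, hball⟩ := Metric.isOpen_iff.mp
      (hIopen.inter isClosed_closure.isOpen_compl) u ⟨hu, hucl⟩
    refine hfin (fun _ => False) δ hδ ?_ (fun w₁ w₂ _ _ _ h => h.elim)
    intro w hwI hw1 hw2
    left
    set x := u + w - tb with hx
    have hux : u < x := by rw [hx]; linarith
    have hxball : x ∈ I ∩ (closure {z : ℝ | z ∈ I ∧ f z = 0})ᶜ := by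
      apply hball
      rw [Metric.mem_ball, Real.dist_eq, hx]
      have h3 : u + w - tb - u = w - tb := by ring
      rw [h3, abs_of_pos (by linarith)]
      linarith
    have hBB := lemB I hIconn φ f heq hφ hxball.1 (fnz hxball.1 hxball.2) htbI htc
    have hmid : (x + tb)/2 = (u + w)/2 := by rw [hx]; ring
    rw [hmid] at hBB
    rw [hBB]
    apply gapconst I hIconn φ f heq hφ hz₀I hz₀f hxball.1 hu hxball.2 hucl
    intro t htI ht1 ht2
    rw [min_eq_right hux.le] at ht1
    rw [max_eq_left hux.le] at ht2
    have htball : t ∈ Metric.ball u δ := by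
      rw [Metric.mem_ball, Real.dist_eq, abs_of_pos (by linarith)]
      have hxd : x - u < δ := by
        rw [hx]
        have := hw2
        linarith
      linarith
    exact (hball htball).2
  · have hftb : f tb ≠ 0 := fnz htbI htc
    have hφtb : φ tb = φ u := by
      have h := heq u hu tb htbI
      rw [hSt] at h
      have h3 : φ u * f tb = φ tb * f tb := by ring_nf at h ⊢; linarith
      exact (mul_right_cancel₀ hftb h3).symm
    set BAD : ℝ → Prop := fun w =>
      (u < w ∧ ∃ p q : ℝ, p ∈ I ∧ p ∈ closure {z : ℝ | z ∈ I ∧ f z = 0} ∧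
        q ∈ I ∧ q ∈ closure {z : ℝ | z ∈ I ∧ f z = 0} ∧ p + q = u + w ∧
        p < w ∧ u < q ∧
        (∀ t, t ∈ I → t ∈ closure {z : ℝ | z ∈ I ∧ f z = 0} → t ≤ w → t ≤ p) ∧
        (∀ t, t ∈ I → t ∈ closure {z : ℝ | z ∈ I ∧ f z = 0} → u ≤ t → q ≤ t) ∧
        ∃ zb, zb ∈ I ∧ zb ∈ closure {z : ℝ | z ∈ I ∧ f z = 0} ∧ u < zb ∧ zb < w) ∨
      (w < u ∧ ∃ p q : ℝ, p ∈ I ∧ p ∈ closure {z : ℝ | z ∈ I ∧ f z = 0} ∧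
        q ∈ I ∧ q ∈ closure {z : ℝ | z ∈ I ∧ f z = 0} ∧ p + q = u + w ∧
        p < u ∧ w < q ∧
        (∀ t, t ∈ I → t ∈ closure {z : ℝ | z ∈ I ∧ f z = 0} → t ≤ u → t ≤ p) ∧
        (∀ t, t ∈ I → t ∈ closure {z : ℝ | z ∈ I ∧ f z = 0} → w ≤ t → q ≤ t)) with hBAD
    have hperv : ∀ w, w ∈ I → tb < w →
        (∀ t, t ∈ I → t ∈ closure {z : ℝ | z ∈ I ∧ f z = 0} → tb < t → t ≤ w → False) →
        (φ ((u + w) / 2) = φ u ∨ BAD w) := by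
      intro w hwI htbw hgapv
      have hwcl : w ∉ closure {z : ℝ | z ∈ I ∧ f z = 0} :=
        fun hc => hgapv w hwI hc htbw le_rfl
      have hφw : φ w = φ u := by
        have h1 : φ w = φ tb := by
          apply gapconst I hIconn φ f heq hφ hz₀I hz₀f hwI htbI hwcl htc
          intro t htI ht1 ht2
          rw [min_eq_right htbw.le] at ht1
          rw [max_eq_left htbw.le] at ht2
          exact fun hc => hgapv t htI hc ht1 ht2.le
        rw [h1, hφtb]
      rcases lt_trichotomy u w with h | h | h
      · by_cases hzb : ∃ zb, zb ∈ I ∧ zb ∈ closure {z : ℝ | z ∈ I ∧ f z = 0} ∧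
            u < zb ∧ zb < w
        · obtain ⟨zb, hzbI, hzbc, hzb1, hzb2⟩ := hzb
          rcases midlem I hIconn φ f heq hφ hz₀I hz₀f hu hwI h hucl hwcl hφw
              hzbI hzbc hzb1 hzb2 with hL |
              ⟨p, q, h1, h2, h3, h4, h5, h6, h7, h8, h9⟩
          · exact Or.inl hL
          · exact Or.inr (Or.inl ⟨h, p, q, h1, h2, h3, h4, h5, h6, h7, h8, h9,
              zb, hzbI, hzbc, hzb1, hzb2⟩)
        · left
          have hmI : (u + w)/2 ∈ I := mid_mem hIconn hu hwI
          have hmcl : (u + w)/2 ∉ closure {z : ℝ | z ∈ I ∧ f z = 0} :=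
            fun hc => hzb ⟨(u + w)/2, hmI, hc, by linarith, by linarith⟩
          apply gapconst I hIconn φ f heq hφ hz₀I hz₀f hmI hu hmcl hucl
          intro t htI ht1 ht2
          have hum : u < (u + w)/2 := by linarith
          rw [min_eq_right hum.le] at ht1
          rw [max_eq_left hum.le] at ht2
          exact fun hc => hzb ⟨t, htI, hc, ht1, by linarith⟩
      · left; rw [← h, add_self_div_two]
      · by_cases hzb : ∃ zb, zb ∈ I ∧ zb ∈ closure {z : ℝ | z ∈ I ∧ f z = 0} ∧
            w < zb ∧ zb < u
        · obtain ⟨zb, hzbI, hzbc, hzb1, hzb2⟩ := hzb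
          rcases midlem I hIconn φ f heq hφ hz₀I hz₀f hwI hu h hwcl hucl hφw.symm
              hzbI hzbc hzb1 hzb2 with hL |
              ⟨p, q, h1, h2, h3, h4, h5, h6, h7, h8, h9⟩
          · left
            have hmid : (w + u)/2 = (u + w)/2 := by ring
            rw [hmid] at hL
            rw [hL, hφw]
          · exact Or.inr (Or.inr ⟨h, p, q, h1, h2, h3, h4, by linarith, h6, h7, h8, h9⟩)
        · left
          have hmI : (u + w)/2 ∈ I := mid_mem hIconn hu hwI
          have hmcl : (u + w)/2 ∉ closure {z : ℝ | z ∈ I ∧ f z = 0} :=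
            fun hc => hzb ⟨(u + w)/2, hmI, hc, by linarith, by linarith⟩
          apply gapconst I hIconn φ f heq hφ hz₀I hz₀f hmI hu hmcl hucl
          intro t htI ht1 ht2
          have hmu : (u + w)/2 < u := by linarith
          rw [min_eq_left hmu.le] at ht1
          rw [max_eq_right hmu.le] at ht2
          exact fun hc => hzb ⟨t, htI, hc, by linarith, ht2⟩
    by_cases hB : ∃ t, t ∈ I ∧ t ∈ closure {z : ℝ | z ∈ I ∧ f z = 0} ∧ tb ≤ t
    · obtain ⟨w₁, hw₁I, hw₁c, hw₁tb⟩ := hB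
      have hsc : IsClosed (closure {z : ℝ | z ∈ I ∧ f z = 0} ∩ Icc tb w₁) :=
        isClosed_closure.inter isClosed_Icc
      have hsne : (closure {z : ℝ | z ∈ I ∧ f z = 0} ∩ Icc tb w₁).Nonempty :=
        ⟨w₁, hw₁c, hw₁tb, le_refl _⟩
      have hsbdd : BddBelow (closure {z : ℝ | z ∈ I ∧ f z = 0} ∩ Icc tb w₁) :=
        ⟨tb, fun a ha => ha.2.1⟩
      set b := sInf (closure {z : ℝ | z ∈ I ∧ f z = 0} ∩ Icc tb w₁) with hbdef
      have hbmem := hsc.csInf_mem hsne hsbdd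
      have hbI : b ∈ I := hIconn.out htbI hw₁I ⟨hbmem.2.1, hbmem.2.2⟩
      have htbb : tb < b := lt_of_le_of_ne hbmem.2.1 (fun h => htc (by rw [h]; exact hbmem.1))
      have hbmin : ∀ t, t ∈ I → t ∈ closure {z : ℝ | z ∈ I ∧ f z = 0} → tb ≤ t → b ≤ t := by
        intro t htI htc' htt
        by_cases h : t ≤ w₁
        · exact csInf_le hsbdd ⟨htc', htt, h⟩
        · exact le_trans hbmem.2.2 (le_of_not_ge h)
      apply hfin BAD (b - tb) (by linarith)
      · intro w hwI h1 h2
        exact hperv w hwI h1 (fun t htI htc' ht1 ht2 =>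
          absurd (hbmin t htI htc' ht1.le) (not_le.mpr (by linarith)))
      · intro w₁' w₂' hw₁I' h₁ h₁' hB₁ hw₂I' h₂ h₂' hB₂
        have hwb₁ : w₁' < b := by linarith
        have hwb₂ : w₂' < b := by linarith
        rcases hB₁ with ⟨hu₁, p₁, q₁, hp₁I, hp₁c, hq₁I, hq₁c, hs₁, hpv₁, hqu₁, hpm₁, hqm₁,
            zb₁, hzb₁I, hzb₁c, hzb₁u, hzb₁w⟩ |
            ⟨hu₁, p₁, q₁, hp₁I, hp₁c, hq₁I, hq₁c, hs₁, hpv₁, hqu₁, hpm₁, hqm₁⟩ <;>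
          rcases hB₂ with ⟨hu₂, p₂, q₂, hp₂I, hp₂c, hq₂I, hq₂c, hs₂, hpv₂, hqu₂, hpm₂, hqm₂,
            zb₂, hzb₂I, hzb₂c, hzb₂u, hzb₂w⟩ |
            ⟨hu₂, p₂, q₂, hp₂I, hp₂c, hq₂I, hq₂c, hs₂, hpv₂, hqu₂, hpm₂, hqm₂⟩
        · have hq : q₁ = q₂ :=
            le_antisymm (hqm₁ q₂ hq₂I hq₂c hqu₂.le) (hqm₂ q₁ hq₁I hq₁c hqu₁.le)
          have hp₁tb : p₁ ≤ tb := by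
            by_contra hcon
            push_neg at hcon
            exact absurd (hbmin p₁ hp₁I hp₁c hcon.le) (not_le.mpr (by linarith))
          have hp₂tb : p₂ ≤ tb := by
            by_contra hcon
            push_neg at hcon
            exact absurd (hbmin p₂ hp₂I hp₂c hcon.le) (not_le.mpr (by linarith))
          have hp : p₁ = p₂ :=
            le_antisymm (hpm₂ p₁ hp₁I hp₁c (by linarith)) (hpm₁ p₂ hp₂I hp₂c (by linarith))
          linarith
        · exact absurd (hbmin zb₁ hzb₁I hzb₁c (by linarith)) (not_le.mpr (by linarith))
        · exact absurd (hbmin zb₂ hzb₂I hzb₂c (by linarith)) (not_le.mpr (by linarith))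
        · have hp : p₁ = p₂ :=
            le_antisymm (hpm₂ p₁ hp₁I hp₁c hpv₁.le) (hpm₁ p₂ hp₂I hp₂c hpv₂.le)
          have hq₁b : q₁ = b :=
            le_antisymm (hqm₁ b hbI hbmem.1 (by linarith)) (hbmin q₁ hq₁I hq₁c (by linarith))
          have hq₂b : q₂ = b :=
            le_antisymm (hqm₂ b hbI hbmem.1 (by linarith)) (hbmin q₂ hq₂I hq₂c (by linarith))
          linarith
    · push_neg at hB
      apply hfin BAD 1 one_pos
      · intro w hwI h1 h2
        exact hperv w hwI h1 (fun t htI htc' ht1 ht2 =>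
          absurd (hB t htI htc') (not_lt.mpr ht1.le))
      · intro w₁' w₂' hw₁I' h₁ h₁' hB₁ hw₂I' h₂ h₂' hB₂
        rcases hB₁ with ⟨hu₁, p₁, q₁, hp₁I, hp₁c, hq₁I, hq₁c, hs₁, hpv₁, hqu₁, hpm₁, hqm₁,
            zb₁, hzb₁I, hzb₁c, hzb₁u, hzb₁w⟩ |
            ⟨hu₁, p₁, q₁, hp₁I, hp₁c, hq₁I, hq₁c, hs₁, hpv₁, hqu₁, hpm₁, hqm₁⟩ <;>
          rcases hB₂ with ⟨hu₂, p₂, q₂, hp₂I, hp₂c, hq₂I, hq₂c, hs₂, hpv₂, hqu₂, hpm₂, hqm₂,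
            zb₂, hzb₂I, hzb₂c, hzb₂u, hzb₂w⟩ |
            ⟨hu₂, p₂, q₂, hp₂I, hp₂c, hq₂I, hq₂c, hs₂, hpv₂, hqu₂, hpm₂, hqm₂⟩
        · have hq : q₁ = q₂ :=
            le_antisymm (hqm₁ q₂ hq₂I hq₂c hqu₂.le) (hqm₂ q₁ hq₁I hq₁c hqu₁.le)
          have hp₁tb : p₁ < tb := hB p₁ hp₁I hp₁c
          have hp₂tb : p₂ < tb := hB p₂ hp₂I hp₂c
          have hp : p₁ = p₂ :=
            le_antisymm (hpm₂ p₁ hp₁I hp₁c (by linarith)) (hpm₁ p₂ hp₂I hp₂c (by linarith))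
          linarith
        · exact absurd (hB q₂ hq₂I hq₂c) (not_lt.mpr (by linarith))
        · exact absurd (hB q₁ hq₁I hq₁c) (not_lt.mpr (by linarith))
        · exact absurd (hB q₁ hq₁I hq₁c) (not_lt.mpr (by linarith))

/-- If the pair of functions `φ, f : I → ℝ` solves the functional equation
`φ((x+y)/2)(f(x)+f(y)) = φ(x)f(x) + φ(y)f(y)` for all `x, y ∈ I`, `φ` is continuous on `I`,
and `Z_f` is nonempty, then `φ` is constant on the set `½((cl̄ Z_f)^c + I)`, where `cl̄ Z_f`
denotes the closure of `Z_f` relative to `I` and `(cl̄ Z_f)^c := I \ cl̄ Z_f`. -/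
theorem stmt5 (I : Set ℝ) (hIopen : IsOpen I) (hIconn : I.OrdConnected)
    (hIne : I.Nonempty) (φ f : ℝ → ℝ)
    (heq : ∀ x ∈ I, ∀ y ∈ I,
      φ ((x + y) / 2) * (f x + f y) = φ x * f x + φ y * f y)
    (hφ : ContinuousOn φ I)
    (hZ : ∃ x ∈ I, f x = 0) :
    ∃ c : ℝ, ∀ u ∈ I \ closure {z ∈ I | f z = 0}, ∀ v ∈ I,
      φ ((u + v) / 2) = c := by
  obtain ⟨z₀, hz₀I, hz₀f⟩ := hZ
  have key : ∀ u ∈ I \ closure {z : ℝ | z ∈ I ∧ f z = 0}, ∀ v ∈ I,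
      φ ((u + v) / 2) = φ u := by
    intro u hu v hv
    rcases le_total z₀ v with h | h
    · exact sweep I hIopen hIconn φ f heq hφ hz₀I hz₀f hu.1 hu.2 v hv h
    · -- reflect
      have hIconn' : (Neg.neg ⁻¹' I : Set ℝ).OrdConnected := by
        constructor
        intro a ha b hb c hc
        have h2 : -c ∈ Icc (-b) (-a) := ⟨neg_le_neg hc.2, neg_le_neg hc.1⟩
        exact hIconn.out hb ha h2
      have hIopen' : IsOpen (Neg.neg ⁻¹' I : Set ℝ) := hIopen.preimage continuous_neg
      have heq' : ∀ x ∈ (Neg.neg ⁻¹' I : Set ℝ), ∀ y ∈ (Neg.neg ⁻¹' I : Set ℝ),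
          (fun t => φ (-t)) ((x + y) / 2) * ((fun t => f (-t)) x + (fun t => f (-t)) y) =
            (fun t => φ (-t)) x * (fun t => f (-t)) x +
              (fun t => φ (-t)) y * (fun t => f (-t)) y := by
        intro x hx y hy
        have h0 := heq (-x) hx (-y) hy
        have e : (-x + -y) / 2 = -((x + y) / 2) := by ring
        rw [e] at h0
        simpa using h0
      have hφ' : ContinuousOn (fun t => φ (-t)) (Neg.neg ⁻¹' I : Set ℝ) :=
        hφ.comp continuous_neg.continuousOn (fun t ht => ht)
      have hucl' : -u ∉ closure {z : ℝ | z ∈ (Neg.neg ⁻¹' I : Set ℝ) ∧ f (-z) = 0} := by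
        intro hc
        apply hu.2
        have hZeq : {z : ℝ | z ∈ (Neg.neg ⁻¹' I : Set ℝ) ∧ f (-z) = 0} =
            Neg.neg ⁻¹' {z : ℝ | z ∈ I ∧ f z = 0} := rfl
        rw [hZeq] at hc
        have h1 : -(-u) ∈ Neg.neg '' closure (Neg.neg ⁻¹' {z : ℝ | z ∈ I ∧ f z = 0}) :=
          ⟨-u, hc, rfl⟩
        have h2 := image_closure_subset_closure_image (f := (Neg.neg : ℝ → ℝ))
          continuous_neg h1
        have h3 : closure (Neg.neg '' (Neg.neg ⁻¹' {z : ℝ | z ∈ I ∧ f z = 0})) ⊆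
            closure {z : ℝ | z ∈ I ∧ f z = 0} :=
          closure_mono (image_preimage_subset _ _)
        have h4 := h3 h2
        simpa using h4
      have hs := sweep (Neg.neg ⁻¹' I : Set ℝ) hIopen' hIconn' (fun t => φ (-t))
        (fun t => f (-t)) heq' hφ' (z₀ := -z₀) (by simpa using hz₀I) (by simpa using hz₀f)
        (u := -u) (by simpa using hu.1) hucl' (-v) (by simpa using hv) (by linarith)
      have e : (-u + -v) / 2 = -((u + v) / 2) := by ring
      rw [e] at hs
      simpa using hs
  by_cases hU : ∃ u₀, u₀ ∈ I \ closure {z : ℝ | z ∈ I ∧ f z = 0}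
  · obtain ⟨u₀, hu₀⟩ := hU
    refine ⟨φ u₀, fun u hu v hv => ?_⟩
    have h1 := key u hu v hv
    have h2 := key u hu u₀ hu₀.1
    have h3 := key u₀ hu₀ u hu.1
    rw [h1, ← h2]
    have hmid : (u₀ + u) / 2 = (u + u₀) / 2 := by ring
    rw [← hmid]
    exact h3
  · exact ⟨0, fun u hu => absurd ⟨u, hu⟩ hU⟩
end

section
/- Suppose the pair of functions φ, f : I → ℝ solves the functional equation φ((x+y)/2)(f(x)+f(y)) = φ(x)f(x) + φ(y)f(y) for all x, y ∈ I, φ is continuous on I, f is nowhere zero on I, and φ is not constant on I. Then φ is not constant on any nonempty open subinterval of I. -/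
/-- Spreading lemma: if `φ = c` on an open interval contained in `I`, then `φ = c`
on the tripled interval (intersected with `I`). -/
lemma stmt7_spread (I : Set ℝ) (φ f : ℝ → ℝ)
    (heq : ∀ x ∈ I, ∀ y ∈ I,
      φ ((x + y) / 2) * (f x + f y) = φ x * f x + φ y * f y)
    (hf : ∀ x ∈ I, f x ≠ 0)
    {A B c y : ℝ} (hAB : A < B) (hsub : Set.Ioo A B ⊆ I)
    (hc : ∀ z ∈ Set.Ioo A B, φ z = c) (hy : y ∈ I)
    (h1 : 2 * A - B < y) (h2 : y < 2 * B - A) : φ y = c := by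
  set L : ℝ := max A (2 * A - y) with hL
  set R : ℝ := min B (2 * B - y) with hR
  have hLR : L < R := by
    rw [hL, hR]
    rcases max_cases A (2 * A - y) with ⟨e, _⟩ | ⟨e, _⟩ <;>
      rcases min_cases B (2 * B - y) with ⟨e', _⟩ | ⟨e', _⟩ <;>
      rw [e, e'] <;> linarith
  set x : ℝ := (L + R) / 2 with hxdef
  have hLx : L < x := by rw [hxdef]; linarith
  have hxR : x < R := by rw [hxdef]; linarith
  have hAx : A < x := lt_of_le_of_lt (le_max_left _ _) hLx
  have hxB : x < B := lt_of_lt_of_le hxR (min_le_left _ _)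
  have hx : x ∈ Set.Ioo A B := ⟨hAx, hxB⟩
  have hxI : x ∈ I := hsub hx
  have hm : (x + y) / 2 ∈ Set.Ioo A B := by
    constructor
    · have : 2 * A - y < x := lt_of_le_of_lt (le_max_right _ _) hLx
      linarith
    · have : x < 2 * B - y := lt_of_lt_of_le hxR (min_le_right _ _)
      linarith
  have e := heq x hxI y hy
  rw [hc _ hm, hc _ hx] at e
  have key : (φ y - c) * f y = 0 := by ring_nf; ring_nf at e; linarith
  rcases mul_eq_zero.mp key with h | h
  · linarith
  · exact absurd h (hf y hy)

/-- Extend rightwards. -/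
lemma stmt7_right (I : Set ℝ) (hIopen : IsOpen I) (hIconn : I.OrdConnected)
    (φ f : ℝ → ℝ)
    (heq : ∀ x ∈ I, ∀ y ∈ I,
      φ ((x + y) / 2) * (f x + f y) = φ x * f x + φ y * f y)
    (hf : ∀ x ∈ I, f x ≠ 0)
    {a b c y : ℝ} (hab : a < b) (hsub : Set.Ioo a b ⊆ I)
    (hc : ∀ z ∈ Set.Ioo a b, φ z = c) (hy : y ∈ I) (hby : b ≤ y) : φ y = c := by
  obtain ⟨ε, hε, hball⟩ := Metric.isOpen_iff.mp hIopen y hy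
  set Y : ℝ := y + ε with hY
  have hball' : Set.Ioo (y - ε) (y + ε) ⊆ I := by
    rw [← Real.ball_eq_Ioo]; exact hball
  have hpI : (a + b) / 2 ∈ I := hsub ⟨by linarith, by linarith⟩
  have hIooY : Set.Ioo a Y ⊆ I := by
    intro z hz
    rcases lt_or_ge z b with h | h
    · exact hsub ⟨hz.1, h⟩
    · rcases le_or_gt z y with h' | h'
      · exact hIconn.out hpI hy ⟨by linarith, h'⟩
      · exact hball' ⟨by linarith, hz.2⟩
  have claim : ∀ n : ℕ, ∀ z : ℝ, a < z → z < Y → z < b + n * (b - a) → φ z = c := by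
    intro n
    induction n with
    | zero =>
      intro z hz1 _ hz3
      push_cast at hz3
      exact hc z ⟨hz1, by linarith⟩
    | succ n ih =>
      intro z hz1 hz2 hz3
      rcases lt_or_ge z (b + n * (b - a)) with h | h
      · exact ih z hz1 hz2 h
      · have hn : (0 : ℝ) ≤ n * (b - a) :=
          mul_nonneg (Nat.cast_nonneg n) (by linarith)
        have hBY : b + n * (b - a) < Y := lt_of_le_of_lt h hz2
        have hsub' : Set.Ioo a (b + n * (b - a)) ⊆ I := by
          intro w hw; exact hIooY ⟨hw.1, lt_trans hw.2 hBY⟩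
        have hc' : ∀ w ∈ Set.Ioo a (b + n * (b - a)), φ w = c := by
          intro w hw; exact ih w hw.1 (lt_trans hw.2 hBY) hw.2
        have hzI : z ∈ I := hIooY ⟨hz1, hz2⟩
        push_cast at hz3
        exact stmt7_spread I φ f heq hf (by linarith) hsub' hc' hzI
          (by linarith) (by nlinarith)
  obtain ⟨n, hn⟩ := exists_nat_gt ((y - b) / (b - a))
  have hnn : y - b < n * (b - a) := by
    rw [div_lt_iff₀ (by linarith : (0:ℝ) < b - a)] at hn
    linarith
  exact claim n y (by linarith) (by linarith) (by linarith)

/-- Extend leftwards. -/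
lemma stmt7_left (I : Set ℝ) (hIopen : IsOpen I) (hIconn : I.OrdConnected)
    (φ f : ℝ → ℝ)
    (heq : ∀ x ∈ I, ∀ y ∈ I,
      φ ((x + y) / 2) * (f x + f y) = φ x * f x + φ y * f y)
    (hf : ∀ x ∈ I, f x ≠ 0)
    {a b c y : ℝ} (hab : a < b) (hsub : Set.Ioo a b ⊆ I)
    (hc : ∀ z ∈ Set.Ioo a b, φ z = c) (hy : y ∈ I) (hya : y ≤ a) : φ y = c := by
  obtain ⟨ε, hε, hball⟩ := Metric.isOpen_iff.mp hIopen y hy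
  set X : ℝ := y - ε with hX
  have hball' : Set.Ioo (y - ε) (y + ε) ⊆ I := by
    rw [← Real.ball_eq_Ioo]; exact hball
  have hpI : (a + b) / 2 ∈ I := hsub ⟨by linarith, by linarith⟩
  have hIooX : Set.Ioo X b ⊆ I := by
    intro z hz
    rcases lt_or_ge a z with h | h
    · exact hsub ⟨h, hz.2⟩
    · rcases le_or_gt y z with h' | h'
      · exact hIconn.out hy hpI ⟨h', by linarith⟩
      · exact hball' ⟨hz.1, by linarith⟩
  have claim : ∀ n : ℕ, ∀ z : ℝ, X < z → z < b → a - n * (b - a) < z → φ z = c := by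
    intro n
    induction n with
    | zero =>
      intro z hz1 hz2 hz3
      push_cast at hz3
      exact hc z ⟨by linarith, hz2⟩
    | succ n ih =>
      intro z hz1 hz2 hz3
      rcases lt_or_ge (a - n * (b - a)) z with h | h
      · exact ih z hz1 hz2 h
      · have hn : (0 : ℝ) ≤ n * (b - a) :=
          mul_nonneg (Nat.cast_nonneg n) (by linarith)
        have hXA : X < a - n * (b - a) := lt_of_lt_of_le hz1 h
        have hsub' : Set.Ioo (a - n * (b - a)) b ⊆ I := by
          intro w hw; exact hIooX ⟨lt_trans hXA hw.1, hw.2⟩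
        have hc' : ∀ w ∈ Set.Ioo (a - n * (b - a)) b, φ w = c := by
          intro w hw; exact ih w (lt_trans hXA hw.1) hw.2 hw.1
        have hzI : z ∈ I := hIooX ⟨hz1, hz2⟩
        push_cast at hz3
        exact stmt7_spread I φ f heq hf (by linarith) hsub' hc' hzI
          (by nlinarith) (by linarith)
  obtain ⟨n, hn⟩ := exists_nat_gt ((a - y) / (b - a))
  have hnn : a - y < n * (b - a) := by
    rw [div_lt_iff₀ (by linarith : (0:ℝ) < b - a)] at hn
    linarith
  exact claim n y (by linarith) (by linarith) (by linarith)

/-- Suppose the pair of functions `φ, f : I → ℝ` solves the functional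
equation `φ((x+y)/2)(f(x)+f(y)) = φ(x)f(x) + φ(y)f(y)` for all `x, y ∈ I`, `φ` is continuous
on `I`, `f` is nowhere zero on `I`, and `φ` is not constant on `I`.  Then `φ` is not constant
on any nonempty open subinterval of `I`. -/
theorem stmt7 (I : Set ℝ) (hIopen : IsOpen I) (hIconn : I.OrdConnected)
    (hIne : I.Nonempty) (φ f : ℝ → ℝ)
    (heq : ∀ x ∈ I, ∀ y ∈ I,
      φ ((x + y) / 2) * (f x + f y) = φ x * f x + φ y * f y)
    (hφ : ContinuousOn φ I)
    (hf : ∀ x ∈ I, f x ≠ 0)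
    (hnc : ¬ ∃ c : ℝ, ∀ x ∈ I, φ x = c) :
    ∀ a b : ℝ, a < b → Set.Ioo a b ⊆ I →
      ¬ ∃ c : ℝ, ∀ x ∈ Set.Ioo a b, φ x = c := by
  intro a b hab hsub ⟨c, hc⟩
  apply hnc
  refine ⟨c, fun y hy => ?_⟩
  rcases le_or_gt y a with h | h
  · exact stmt7_left I hIopen hIconn φ f heq hf hab hsub hc hy h
  · rcases lt_or_ge y b with h' | h'
    · exact hc y ⟨h, h'⟩
    · exact stmt7_right I hIopen hIconn φ f heq hf hab hsub hc hy h'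
end

section
/- Suppose the pair of functions φ, f : I → ℝ solves the functional equation φ((x+y)/2)(f(x)+f(y)) = φ(x)f(x) + φ(y)f(y) for all x, y ∈ I, and both φ and f are twice continuously differentiable on I. Then φ''(x)f(x) + 2φ'(x)f'(x) = 0 for all x ∈ I, and consequently the function x ↦ φ'(x)·f(x)² is constant on I. -/
/-- Suppose the pair of functions `φ, f : I → ℝ` solves the functional
equation `φ((x+y)/2)(f(x)+f(y)) = φ(x)f(x) + φ(y)f(y)` for all `x, y ∈ I`, and both `φ` and
`f` are twice continuously differentiable on `I`.  Then
`φ''(x)f(x) + 2φ'(x)f'(x) = 0` for all `x ∈ I`, and consequently the function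
`x ↦ φ'(x)·f(x)²` is constant on `I`. -/
theorem stmt8 (I : Set ℝ) (hIopen : IsOpen I) (hIconn : I.OrdConnected)
    (hIne : I.Nonempty) (φ f : ℝ → ℝ)
    (heq : ∀ x ∈ I, ∀ y ∈ I,
      φ ((x + y) / 2) * (f x + f y) = φ x * f x + φ y * f y)
    (hφ : ContDiffOn ℝ 2 φ I) (hf : ContDiffOn ℝ 2 f I) :
    (∀ x ∈ I, deriv (deriv φ) x * f x + 2 * deriv φ x * deriv f x = 0) ∧
    ∃ c : ℝ, ∀ x ∈ I, deriv φ x * (f x) ^ 2 = c := by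
  have hI : ∀ x ∈ I, I ∈ nhds x := fun x hx => hIopen.mem_nhds hx
  have hφ1 : ContDiffOn ℝ 1 (deriv φ) I := hφ.deriv_of_isOpen hIopen (by norm_num)
  have hf1 : ContDiffOn ℝ 1 (deriv f) I := hf.deriv_of_isOpen hIopen (by norm_num)
  have hφd : ∀ x ∈ I, DifferentiableAt ℝ φ x := fun x hx =>
    ((hφ.differentiableOn (by norm_num)) x hx).differentiableAt (hI x hx)
  have hfd : ∀ x ∈ I, DifferentiableAt ℝ f x := fun x hx =>
    ((hf.differentiableOn (by norm_num)) x hx).differentiableAt (hI x hx)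
  have hφd' : ∀ x ∈ I, DifferentiableAt ℝ (deriv φ) x := fun x hx =>
    ((hφ1.differentiableOn (by norm_num)) x hx).differentiableAt (hI x hx)
  have hfd' : ∀ x ∈ I, DifferentiableAt ℝ (deriv f) x := fun x hx =>
    ((hf1.differentiableOn (by norm_num)) x hx).differentiableAt (hI x hx)
  have hmid : ∀ x ∈ I, ∀ y ∈ I, (x + y) / 2 ∈ I := by
    intro x hx y hy
    apply hIconn.uIcc_subset hx hy
    rw [Set.mem_uIcc]
    rcases le_total x y with h | h
    · left; constructor <;> linarith
    · right; constructor <;> linarith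
  -- half-derivative of the midpoint map
  have hhalf : ∀ (y : ℝ) (x : ℝ), HasDerivAt (fun x : ℝ => (x + y) / 2) (1 / 2) x := by
    intro y x
    simpa using ((hasDerivAt_id x).add_const y).div_const 2
  -- First derivative identity
  have A : ∀ y ∈ I, ∀ x ∈ I,
      deriv φ ((x + y) / 2) * (1 / 2) * (f x + f y) + φ ((x + y) / 2) * deriv f x
        = deriv φ x * f x + φ x * deriv f x := by
    intro y hy x hx
    have hm : (x + y) / 2 ∈ I := hmid x hx y hy
    have hL : HasDerivAt (fun x => φ ((x + y) / 2) * (f x + f y))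
        (deriv φ ((x + y) / 2) * (1 / 2) * (f x + f y)
          + φ ((x + y) / 2) * deriv f x) x := by
      have h1 : HasDerivAt (fun x : ℝ => φ ((x + y) / 2))
          (deriv φ ((x + y) / 2) * (1 / 2)) x :=
        ((hφd _ hm).hasDerivAt).comp x (hhalf y x)
      exact h1.mul (((hfd x hx).hasDerivAt).add_const (f y))
    have hR : HasDerivAt (fun x => φ x * f x + φ y * f y)
        (deriv φ x * f x + φ x * deriv f x) x :=
      (((hφd x hx).hasDerivAt).mul ((hfd x hx).hasDerivAt)).add_const (φ y * f y)
    have hev : (fun x => φ ((x + y) / 2) * (f x + f y))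
        =ᶠ[nhds x] (fun x => φ x * f x + φ y * f y) :=
      Filter.eventuallyEq_of_mem (hI x hx) (fun z hz => heq z hz y hy)
    exact (hL.congr_of_eventuallyEq hev.symm).unique hR
  -- Second derivative identity, at y = x
  have B : ∀ x ∈ I, deriv (deriv φ) x * f x + 2 * deriv φ x * deriv f x = 0 := by
    intro x hx
    have hL : HasDerivAt
        (fun z => deriv φ ((z + x) / 2) * (1 / 2) * (f z + f x)
          + φ ((z + x) / 2) * deriv f z)
        ((deriv (deriv φ) ((x + x) / 2) * (1 / 2) * (1 / 2)) * (f x + f x)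
          + deriv φ ((x + x) / 2) * (1 / 2) * deriv f x
          + (deriv φ ((x + x) / 2) * (1 / 2) * deriv f x
            + φ ((x + x) / 2) * deriv (deriv f) x)) x := by
      have hm : (x + x) / 2 ∈ I := hmid x hx x hx
      have h1 : HasDerivAt (fun z : ℝ => deriv φ ((z + x) / 2))
          (deriv (deriv φ) ((x + x) / 2) * (1 / 2)) x :=
        by have := ((hφd' _ hm).hasDerivAt).comp x (hhalf x x); exact this
      have h2 : HasDerivAt (fun z : ℝ => φ ((z + x) / 2))
          (deriv φ ((x + x) / 2) * (1 / 2)) x :=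
        ((hφd _ hm).hasDerivAt).comp x (hhalf x x)
      have h3 := (h1.mul_const (1 / 2)).mul (((hfd x hx).hasDerivAt).add_const (f x))
      have h4 := h2.mul ((hfd' x hx).hasDerivAt)
      exact h3.add h4
    have hR : HasDerivAt (fun z => deriv φ z * f z + φ z * deriv f z)
        ((deriv (deriv φ) x * f x + deriv φ x * deriv f x)
          + (deriv φ x * deriv f x + φ x * deriv (deriv f) x)) x :=
      (((hφd' x hx).hasDerivAt).mul ((hfd x hx).hasDerivAt)).add
        (((hφd x hx).hasDerivAt).mul ((hfd' x hx).hasDerivAt))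
    have hev : (fun z => deriv φ ((z + x) / 2) * (1 / 2) * (f z + f x)
          + φ ((z + x) / 2) * deriv f z)
        =ᶠ[nhds x] (fun z => deriv φ z * f z + φ z * deriv f z) :=
      Filter.eventuallyEq_of_mem (hI x hx) (fun z hz => A x hx z hz)
    have key := (hL.congr_of_eventuallyEq hev.symm).unique hR
    have hxx : (x + x) / 2 = x := by ring
    rw [hxx] at key
    nlinarith [key]
  refine ⟨B, ?_⟩
  -- Constancy of x ↦ φ'(x) f(x)²
  set g : ℝ → ℝ := fun x => deriv φ x * (f x) ^ 2 with hg
  have hg0 : ∀ x ∈ I, HasDerivAt g 0 x := by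
    intro x hx
    have h := ((hφd' x hx).hasDerivAt).mul (((hfd x hx).hasDerivAt).pow 2)
    refine h.congr_deriv (Eq.symm ?_)
    push_cast [Pi.pow_apply]
    linear_combination (-(f x)) * B x hx
  have hgd : DifferentiableOn ℝ g I := fun x hx =>
    ((hg0 x hx).differentiableAt).differentiableWithinAt
  have hfz : ∀ x ∈ I, fderivWithin ℝ g I x = 0 := by
    intro x hx
    rw [fderivWithin_of_isOpen hIopen hx, (hg0 x hx).hasFDerivAt.fderiv]
    ext
    simp
  obtain ⟨x₀, hx₀⟩ := hIne
  exact ⟨g x₀, fun x hx =>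
    hIconn.convex.is_const_of_fderivWithin_eq_zero hgd hfz hx hx₀⟩
end

section
/- Let f, g : I → ℝ be n times differentiable functions. Then for all x, y ∈ I and all n ≥ 1, the n-th partial derivative of D_{f,g}(x,y) with respect to the first variable equals Σ_{k=0}^{n−1} 2^{−k} C(n,k) · [ f^{(k)}((x+y)/2) g^{(n−k)}(x) − g^{(k)}((x+y)/2) f^{(n−k)}(x) ] + 2^{−n} · [ f^{(n)}((x+y)/2)(g(x)+g(y)) − g^{(n)}((x+y)/2)(f(x)+f(y)) ]. -/
/-- The two-variable determinant expression
`D_{f,g}(x,y) = f((x+y)/2)·(g(x)+g(y)) − g((x+y)/2)·(f(x)+f(y))`. -/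
noncomputable def Dfg (f g : ℝ → ℝ) (x y : ℝ) : ℝ :=
  f ((x + y) / 2) * (g x + g y) - g ((x + y) / 2) * (f x + f y)

lemma aux (I : Set ℝ) (hIopen : IsOpen I) (hIconn : I.OrdConnected)
    (f g : ℝ → ℝ) (y : ℝ) (hy : y ∈ I) :
    ∀ n : ℕ, (∀ k < n, ∀ x ∈ I, DifferentiableAt ℝ (iteratedDeriv k f) x) →
      (∀ k < n, ∀ x ∈ I, DifferentiableAt ℝ (iteratedDeriv k g) x) →
    ∀ x ∈ I,
      iteratedDeriv n (fun t => Dfg f g t y) x =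
        (∑ k ∈ Finset.range n, (1 / 2 ^ k : ℝ) * (n.choose k : ℝ) *
          (iteratedDeriv k f ((x + y) / 2) * iteratedDeriv (n - k) g x -
            iteratedDeriv k g ((x + y) / 2) * iteratedDeriv (n - k) f x)) +
        (1 / 2 ^ n : ℝ) *
          (iteratedDeriv n f ((x + y) / 2) * (g x + g y) -
            iteratedDeriv n g ((x + y) / 2) * (f x + f y)) := by
  intro n
  induction n with
  | zero =>
    intro hf hg x hx
    simp [Dfg]
  | succ n IH =>
    intro hf hg x hx
    have hf' : ∀ k < n, ∀ x ∈ I, DifferentiableAt ℝ (iteratedDeriv k f) x :=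
      fun k hk => hf k (by omega)
    have hg' : ∀ k < n, ∀ x ∈ I, DifferentiableAt ℝ (iteratedDeriv k g) x :=
      fun k hk => hg k (by omega)
    have hmid : (x + y) / 2 ∈ I := by
      rcases le_total x y with h | h
      · exact hIconn.out hx hy ⟨by linarith, by linarith⟩
      · exact hIconn.out hy hx ⟨by linarith, by linarith⟩
    -- midpoint of t and y for t ∈ I
    have hmidt : ∀ t ∈ I, (t + y) / 2 ∈ I := by
      intro t ht
      rcases le_total t y with h | h
      · exact hIconn.out ht hy ⟨by linarith, by linarith⟩
      · exact hIconn.out hy ht ⟨by linarith, by linarith⟩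
    set m := (x + y) / 2 with hm
    -- inner map derivative
    have hin : HasDerivAt (fun t : ℝ => (t + y) / 2) (1 / 2) x := by
      simpa using ((hasDerivAt_id x).add_const y).div_const 2
    have hF : ∀ k ≤ n, HasDerivAt (fun t => iteratedDeriv k f ((t + y) / 2))
        (iteratedDeriv (k + 1) f m * (1 / 2)) x := by
      intro k hk
      have h2 : HasDerivAt (iteratedDeriv k f) (iteratedDeriv (k + 1) f m) m := by
        rw [iteratedDeriv_succ]
        exact (hf k (by omega) m hmid).hasDerivAt
      exact h2.comp x hin
    have hG : ∀ k ≤ n, HasDerivAt (fun t => iteratedDeriv k g ((t + y) / 2))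
        (iteratedDeriv (k + 1) g m * (1 / 2)) x := by
      intro k hk
      have h2 : HasDerivAt (iteratedDeriv k g) (iteratedDeriv (k + 1) g m) m := by
        rw [iteratedDeriv_succ]
        exact (hg k (by omega) m hmid).hasDerivAt
      exact h2.comp x hin
    have hFx : ∀ k ≤ n, HasDerivAt (iteratedDeriv k f) (iteratedDeriv (k + 1) f x) x := by
      intro k hk
      rw [iteratedDeriv_succ]
      exact (hf k (by omega) x hx).hasDerivAt
    have hGx : ∀ k ≤ n, HasDerivAt (iteratedDeriv k g) (iteratedDeriv (k + 1) g x) x := by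
      intro k hk
      rw [iteratedDeriv_succ]
      exact (hg k (by omega) x hx).hasDerivAt
    have hgd : HasDerivAt g (iteratedDeriv 1 g x) x := by
      simpa [iteratedDeriv_one] using
        ((by simpa using hg 0 (by omega) x hx : DifferentiableAt ℝ g x)).hasDerivAt
    have hfd : HasDerivAt f (iteratedDeriv 1 f x) x := by
      simpa [iteratedDeriv_one] using
        ((by simpa using hf 0 (by omega) x hx : DifferentiableAt ℝ f x)).hasDerivAt
    -- the function S
    set S : ℝ → ℝ := fun t =>
      (∑ k ∈ Finset.range n, (1 / 2 ^ k : ℝ) * (n.choose k : ℝ) *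
        (iteratedDeriv k f ((t + y) / 2) * iteratedDeriv (n - k) g t -
          iteratedDeriv k g ((t + y) / 2) * iteratedDeriv (n - k) f t)) +
      (1 / 2 ^ n : ℝ) *
        (iteratedDeriv n f ((t + y) / 2) * (g t + g y) -
          iteratedDeriv n g ((t + y) / 2) * (f t + f y)) with hS
    have heq : (fun t => iteratedDeriv n (fun s => Dfg f g s y) t) =ᶠ[nhds x] S := by
      filter_upwards [hIopen.mem_nhds hx] with t ht
      exact IH hf' hg' t ht
    have hd : HasDerivAt S
        ((∑ k ∈ Finset.range n, (1 / 2 ^ k : ℝ) * (n.choose k : ℝ) *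
          ((iteratedDeriv (k + 1) f m * (1 / 2)) * iteratedDeriv (n - k) g x
            + iteratedDeriv k f m * iteratedDeriv (n - k + 1) g x
            - ((iteratedDeriv (k + 1) g m * (1 / 2)) * iteratedDeriv (n - k) f x
            + iteratedDeriv k g m * iteratedDeriv (n - k + 1) f x)))
        + (1 / 2 ^ n : ℝ) *
          ((iteratedDeriv (n + 1) f m * (1 / 2)) * (g x + g y)
            + iteratedDeriv n f m * iteratedDeriv 1 g x
            - ((iteratedDeriv (n + 1) g m * (1 / 2)) * (f x + f y)
            + iteratedDeriv n g m * iteratedDeriv 1 f x))) x := by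
      apply HasDerivAt.add
      · apply HasDerivAt.fun_sum
        intro k hk
        have hk' : k ≤ n := le_of_lt (Finset.mem_range.mp hk)
        exact (((hF k hk').mul (hGx (n - k) (by omega))).sub
          ((hG k hk').mul (hFx (n - k) (by omega)))).const_mul _
      · exact (((hF n le_rfl).mul (hgd.add_const (g y))).sub
          ((hG n le_rfl).mul (hfd.add_const (f y)))).const_mul _
    rw [iteratedDeriv_succ]
    rw [heq.deriv_eq, hd.deriv]
    -- now pure algebra
    have key : ∀ k ∈ Finset.range n,
        (1 / 2 ^ k : ℝ) * (n.choose k : ℝ) *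
          ((iteratedDeriv (k + 1) f m * (1 / 2)) * iteratedDeriv (n - k) g x
            + iteratedDeriv k f m * iteratedDeriv (n - k + 1) g x
            - ((iteratedDeriv (k + 1) g m * (1 / 2)) * iteratedDeriv (n - k) f x
            + iteratedDeriv k g m * iteratedDeriv (n - k + 1) f x))
        = (1 / 2 ^ (k+1) : ℝ) * (n.choose k : ℝ) *
            (iteratedDeriv (k+1) f m * iteratedDeriv (n + 1 - (k+1)) g x -
              iteratedDeriv (k+1) g m * iteratedDeriv (n + 1 - (k+1)) f x)
          + (1 / 2 ^ k : ℝ) * (n.choose k : ℝ) *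
            (iteratedDeriv k f m * iteratedDeriv (n + 1 - k) g x -
              iteratedDeriv k g m * iteratedDeriv (n + 1 - k) f x) := by
      intro k hk
      have hk' : k < n := Finset.mem_range.mp hk
      rw [show n + 1 - (k + 1) = n - k from by omega, show n + 1 - k = n - k + 1 from by omega]
      ring
    rw [Finset.sum_congr rfl key, Finset.sum_add_distrib]
    -- RHS manipulation
    have hrhs : (∑ k ∈ Finset.range (n+1), (1 / 2 ^ k : ℝ) * ((n+1).choose k : ℝ) *
          (iteratedDeriv k f m * iteratedDeriv (n + 1 - k) g x -
            iteratedDeriv k g m * iteratedDeriv (n + 1 - k) f x))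
        = (∑ k ∈ Finset.range n, (1 / 2 ^ (k+1) : ℝ) * (n.choose k : ℝ) *
            (iteratedDeriv (k+1) f m * iteratedDeriv (n + 1 - (k+1)) g x -
              iteratedDeriv (k+1) g m * iteratedDeriv (n + 1 - (k+1)) f x))
          + ((∑ k ∈ Finset.range n, (1 / 2 ^ k : ℝ) * (n.choose k : ℝ) *
            (iteratedDeriv k f m * iteratedDeriv (n + 1 - k) g x -
              iteratedDeriv k g m * iteratedDeriv (n + 1 - k) f x))
            + (1 / 2 ^ n : ℝ) *
              (iteratedDeriv n f m * iteratedDeriv 1 g x -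
                iteratedDeriv n g m * iteratedDeriv 1 f x)) := by
      rw [Finset.sum_range_succ' _ n]
      have expand : ∀ k ∈ Finset.range n,
          (1 / 2 ^ (k+1) : ℝ) * ((n+1).choose (k+1) : ℝ) *
            (iteratedDeriv (k+1) f m * iteratedDeriv (n + 1 - (k+1)) g x -
              iteratedDeriv (k+1) g m * iteratedDeriv (n + 1 - (k+1)) f x)
          = (1 / 2 ^ (k+1) : ℝ) * (n.choose k : ℝ) *
              (iteratedDeriv (k+1) f m * iteratedDeriv (n + 1 - (k+1)) g x -
                iteratedDeriv (k+1) g m * iteratedDeriv (n + 1 - (k+1)) f x)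
            + (1 / 2 ^ (k+1) : ℝ) * (n.choose (k+1) : ℝ) *
              (iteratedDeriv (k+1) f m * iteratedDeriv (n + 1 - (k+1)) g x -
                iteratedDeriv (k+1) g m * iteratedDeriv (n + 1 - (k+1)) f x) := by
        intro k hk
        rw [Nat.choose_succ_succ]
        push_cast
        ring
      rw [Finset.sum_congr rfl expand, Finset.sum_add_distrib]
      have h2 : (∑ k ∈ Finset.range n, (1 / 2 ^ (k+1) : ℝ) * (n.choose (k+1) : ℝ) *
            (iteratedDeriv (k+1) f m * iteratedDeriv (n + 1 - (k+1)) g x -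
              iteratedDeriv (k+1) g m * iteratedDeriv (n + 1 - (k+1)) f x))
          + (1 / 2 ^ 0 : ℝ) * ((n+1).choose 0 : ℝ) *
            (iteratedDeriv 0 f m * iteratedDeriv (n + 1 - 0) g x -
              iteratedDeriv 0 g m * iteratedDeriv (n + 1 - 0) f x)
          = ∑ k ∈ Finset.range (n+1), (1 / 2 ^ k : ℝ) * (n.choose k : ℝ) *
              (iteratedDeriv k f m * iteratedDeriv (n + 1 - k) g x -
                iteratedDeriv k g m * iteratedDeriv (n + 1 - k) f x) := by
        rw [Finset.sum_range_succ' _ n]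
        simp
      rw [add_assoc, h2, Finset.sum_range_succ]
      simp only [show n + 1 - n = 1 from by omega, Nat.choose_self, Nat.cast_one]
      ring
    rw [hrhs]
    ring

/-- Let `f, g : I → ℝ` be `n` times differentiable functions.  Then for
all `x, y ∈ I` and all `n ≥ 1`, the `n`-th partial derivative of `D_{f,g}(x,y)` with respect
to the first variable equals
`Σ_{k=0}^{n−1} 2^{−k} C(n,k) · [ f^{(k)}((x+y)/2) g^{(n−k)}(x) − g^{(k)}((x+y)/2) f^{(n−k)}(x) ]`
`+ 2^{−n} · [ f^{(n)}((x+y)/2)(g(x)+g(y)) − g^{(n)}((x+y)/2)(f(x)+f(y)) ]`. -/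
theorem stmt11 (I : Set ℝ) (hIopen : IsOpen I) (hIconn : I.OrdConnected)
    (hIne : I.Nonempty) (f g : ℝ → ℝ) (n : ℕ) (hn : 1 ≤ n)
    (hf : ∀ k < n, ∀ x ∈ I, DifferentiableAt ℝ (iteratedDeriv k f) x)
    (hg : ∀ k < n, ∀ x ∈ I, DifferentiableAt ℝ (iteratedDeriv k g) x) :
    ∀ x ∈ I, ∀ y ∈ I,
      iteratedDeriv n (fun t => Dfg f g t y) x =
        (∑ k ∈ Finset.range n, (1 / 2 ^ k : ℝ) * (n.choose k : ℝ) *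
          (iteratedDeriv k f ((x + y) / 2) * iteratedDeriv (n - k) g x -
            iteratedDeriv k g ((x + y) / 2) * iteratedDeriv (n - k) f x)) +
        (1 / 2 ^ n : ℝ) *
          (iteratedDeriv n f ((x + y) / 2) * (g x + g y) -
            iteratedDeriv n g ((x + y) / 2) * (f x + f y)) := by
  intro x hx y hy
  exact aux I hIopen hIconn f g y hy n hf hg x hx
end

section
/- Let f, g : I → ℝ be 4 times differentiable functions such that D_{f,g}(x,y) = 0 for all x, y ∈ I. Then W^{0,2}_{f,g}(x) = 0 and W^{1,3}_{f,g}(x) = 0 for all x ∈ I, and consequently there exist real constants α, β such that W^{0,1}_{f,g}(x) = α and W^{1,2}_{f,g}(x) = β for all x ∈ I. -/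
/-- The generalized Wronskian
`W^{k,ℓ}_{f,g}(x) = f^{(k)}(x) g^{(ℓ)}(x) − g^{(k)}(x) f^{(ℓ)}(x)`. -/
noncomputable def Wfg (f g : ℝ → ℝ) (k l : ℕ) (x : ℝ) : ℝ :=
  iteratedDeriv k f x * iteratedDeriv l g x - iteratedDeriv k g x * iteratedDeriv l f x

/-- Derivative of `z ↦ φ((x+z)/2) * ψ z`. -/
lemma hdm {φ dφ ψ dψ : ℝ → ℝ} {x y : ℝ}
    (hφ : HasDerivAt φ (dφ ((x + y) / 2)) ((x + y) / 2)) (hψ : HasDerivAt ψ (dψ y) y) :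
    HasDerivAt (fun z => φ ((x + z) / 2) * ψ z)
      (dφ ((x + y) / 2) / 2 * ψ y + φ ((x + y) / 2) * dψ y) y := by
  have hm : HasDerivAt (fun z : ℝ => (x + z) / 2) (1 / 2 : ℝ) y := by
    simpa using ((hasDerivAt_id y).const_add x).div_const 2
  have h := (hφ.comp y hm).mul hψ
  simp only [Function.comp] at h
  exact h.congr_deriv (by ring)

/-- If a function vanishes on an open set, so does its derivative. -/
lemma zero_of_deriv {E : ℝ → ℝ} {e : ℝ} {s : Set ℝ} (hs : IsOpen s) (h0 : ∀ z ∈ s, E z = 0)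
    {y : ℝ} (hy : y ∈ s) (hd : HasDerivAt E e y) : e = 0 := by
  have hev : E =ᶠ[nhds y] fun _ => (0 : ℝ) :=
    Filter.eventuallyEq_of_mem (hs.mem_nhds hy) h0
  have := hev.deriv_eq
  rw [hd.deriv] at this
  simpa using this

lemma aux_main (I : Set ℝ) (hIopen : IsOpen I)
    (f f1 f2 f3 g g1 g2 g3 : ℝ → ℝ)
    (Hf0 : ∀ z ∈ I, HasDerivAt f (f1 z) z)
    (Hf1 : ∀ z ∈ I, HasDerivAt f1 (f2 z) z)
    (Hf2 : ∀ z ∈ I, HasDerivAt f2 (f3 z) z)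
    (Hf3 : ∀ z ∈ I, DifferentiableAt ℝ f3 z)
    (Hg0 : ∀ z ∈ I, HasDerivAt g (g1 z) z)
    (Hg1 : ∀ z ∈ I, HasDerivAt g1 (g2 z) z)
    (Hg2 : ∀ z ∈ I, HasDerivAt g2 (g3 z) z)
    (Hg3 : ∀ z ∈ I, DifferentiableAt ℝ g3 z)
    (hD : ∀ x ∈ I, ∀ y ∈ I,
      f ((x + y) / 2) * (g x + g y) - g ((x + y) / 2) * (f x + f y) = 0) :
    (∀ x ∈ I, f x * g2 x - g x * f2 x = 0) ∧
      (∀ x ∈ I, f1 x * g3 x - g1 x * f3 x = 0) := by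
  have Hf3' : ∀ z ∈ I, HasDerivAt f3 (deriv f3 z) z := fun z hz => (Hf3 z hz).hasDerivAt
  have Hg3' : ∀ z ∈ I, HasDerivAt g3 (deriv g3 z) z := fun z hz => (Hg3 z hz).hasDerivAt
  -- The key local analysis at a point x ∈ I: both the 2nd and 4th derivative relations.
  have key : ∀ x ∈ I, f x * g2 x - g x * f2 x = 0 ∧
      (1/16 : ℝ) * (deriv f3 x * (g x + g x)) + (1/2) * (f3 x * g1 x)
        + (3/2) * (f2 x * g2 x) + 2 * (f1 x * g3 x) + f x * deriv g3 x
      - ((1/16 : ℝ) * (deriv g3 x * (f x + f x)) + (1/2) * (g3 x * f1 x)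
        + (3/2) * (g2 x * f2 x) + 2 * (g1 x * f3 x) + g x * deriv f3 x) = 0 := by
    intro x hx
    obtain ⟨ε, hε, hball⟩ := Metric.isOpen_iff.1 hIopen x hx
    have hxball : x ∈ Metric.ball x ε := Metric.mem_ball_self hε
    have hmem : ∀ y ∈ Metric.ball x ε, y ∈ I := fun y hy => hball hy
    have hmid : ∀ y ∈ Metric.ball x ε, ((x + y) / 2) ∈ I := by
      intro y hy
      apply hball
      rw [Metric.mem_ball, Real.dist_eq] at hy ⊢
      have h1 : (x + y) / 2 - x = (y - x) / 2 := by ring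
      rw [h1, abs_div, abs_two]
      have := abs_nonneg (y - x)
      linarith
    have Z0 : ∀ z ∈ Metric.ball x ε,
        f ((x + z) / 2) * (g x + g z) - g ((x + z) / 2) * (f x + f z) = 0 :=
      fun z hz => hD x hx z (hmem z hz)
    have Z1 : ∀ y ∈ Metric.ball x ε,
        (1/2 : ℝ) * (f1 ((x + y) / 2) * (g x + g y)) + f ((x + y) / 2) * g1 y
        - ((1/2 : ℝ) * (g1 ((x + y) / 2) * (f x + f y)) + g ((x + y) / 2) * f1 y) = 0 := by
      intro y hy
      have hyI := hmem y hy
      have hmI := hmid y hy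
      have hd := (hdm (Hf0 _ hmI) ((Hg0 y hyI).const_add (g x))).sub
        (hdm (Hg0 _ hmI) ((Hf0 y hyI).const_add (f x)))
      refine zero_of_deriv Metric.isOpen_ball Z0 hy (hd.congr_deriv ?_)
      ring
    have Z2 : ∀ y ∈ Metric.ball x ε,
        (1/4 : ℝ) * (f2 ((x + y) / 2) * (g x + g y)) + f1 ((x + y) / 2) * g1 y
          + f ((x + y) / 2) * g2 y
        - ((1/4 : ℝ) * (g2 ((x + y) / 2) * (f x + f y)) + g1 ((x + y) / 2) * f1 y
          + g ((x + y) / 2) * f2 y) = 0 := by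
      intro y hy
      have hyI := hmem y hy
      have hmI := hmid y hy
      have hd := (((hdm (Hf1 _ hmI) ((Hg0 y hyI).const_add (g x))).const_mul (1/2)).add
              (hdm (Hf0 _ hmI) (Hg1 y hyI))).sub
            (((hdm (Hg1 _ hmI) ((Hf0 y hyI).const_add (f x))).const_mul (1/2)).add
              (hdm (Hg0 _ hmI) (Hf1 y hyI)))
      refine zero_of_deriv Metric.isOpen_ball Z1 hy (hd.congr_deriv ?_)
      ring
    have Z3 : ∀ y ∈ Metric.ball x ε,
        (1/8 : ℝ) * (f3 ((x + y) / 2) * (g x + g y)) + (3/4 : ℝ) * (f2 ((x + y) / 2) * g1 y)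
          + (3/2 : ℝ) * (f1 ((x + y) / 2) * g2 y) + f ((x + y) / 2) * g3 y
        - ((1/8 : ℝ) * (g3 ((x + y) / 2) * (f x + f y)) + (3/4 : ℝ) * (g2 ((x + y) / 2) * f1 y)
          + (3/2 : ℝ) * (g1 ((x + y) / 2) * f2 y) + g ((x + y) / 2) * f3 y) = 0 := by
      intro y hy
      have hyI := hmem y hy
      have hmI := hmid y hy
      have hd := ((((hdm (Hf2 _ hmI) ((Hg0 y hyI).const_add (g x))).const_mul (1/4)).add
              (hdm (Hf1 _ hmI) (Hg1 y hyI))).add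
              (hdm (Hf0 _ hmI) (Hg2 y hyI))).sub
            ((((hdm (Hg2 _ hmI) ((Hf0 y hyI).const_add (f x))).const_mul (1/4)).add
              (hdm (Hg1 _ hmI) (Hf1 y hyI))).add
              (hdm (Hg0 _ hmI) (Hf2 y hyI)))
      refine zero_of_deriv Metric.isOpen_ball Z2 hy (hd.congr_deriv ?_)
      ring
    have Z4 : ∀ y ∈ Metric.ball x ε,
        (1/16 : ℝ) * (deriv f3 ((x + y) / 2) * (g x + g y))
          + (1/2 : ℝ) * (f3 ((x + y) / 2) * g1 y)
          + (3/2 : ℝ) * (f2 ((x + y) / 2) * g2 y) + 2 * (f1 ((x + y) / 2) * g3 y)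
          + f ((x + y) / 2) * deriv g3 y
        - ((1/16 : ℝ) * (deriv g3 ((x + y) / 2) * (f x + f y))
          + (1/2 : ℝ) * (g3 ((x + y) / 2) * f1 y)
          + (3/2 : ℝ) * (g2 ((x + y) / 2) * f2 y) + 2 * (g1 ((x + y) / 2) * f3 y)
          + g ((x + y) / 2) * deriv f3 y) = 0 := by
      intro y hy
      have hyI := hmem y hy
      have hmI := hmid y hy
      have hd := (((((hdm (Hf3' _ hmI) ((Hg0 y hyI).const_add (g x))).const_mul (1/8)).add
              ((hdm (Hf2 _ hmI) (Hg1 y hyI)).const_mul (3/4))).add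
              ((hdm (Hf1 _ hmI) (Hg2 y hyI)).const_mul (3/2))).add
              (hdm (Hf0 _ hmI) (Hg3' y hyI))).sub
            ((((((hdm (Hg3' _ hmI) ((Hf0 y hyI).const_add (f x))).const_mul (1/8)).add
              ((hdm (Hg2 _ hmI) (Hf1 y hyI)).const_mul (3/4))).add
              ((hdm (Hg1 _ hmI) (Hf2 y hyI)).const_mul (3/2))).add
              (hdm (Hg0 _ hmI) (Hf3' y hyI))))
      refine zero_of_deriv Metric.isOpen_ball Z3 hy (hd.congr_deriv ?_)
      ring
    have hxx : (x + x) / 2 = x := by ring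
    constructor
    · have h2 := Z2 x hxball
      rw [hxx] at h2
      linear_combination 2 * h2
    · have h4 := Z4 x hxball
      rw [hxx] at h4
      linear_combination h4
  refine ⟨fun x hx => (key x hx).1, ?_⟩
  intro x hx
  have h4 := (key x hx).2
  have ZW1 : ∀ y ∈ I, f1 y * g2 y + f y * g3 y - (g1 y * f2 y + g y * f3 y) = 0 := by
    intro y hy
    have hd := ((Hf0 y hy).mul (Hg2 y hy)).sub ((Hg0 y hy).mul (Hf2 y hy))
    exact zero_of_deriv hIopen (fun z hz => (key z hz).1) hy hd
  have hZW2 : (f2 x * g2 x + f1 x * g3 x + (f1 x * g3 x + f x * deriv g3 x))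
      - (g2 x * f2 x + g1 x * f3 x + (g1 x * f3 x + g x * deriv f3 x)) = 0 := by
    have hd := (((Hf1 x hx).mul (Hg2 x hx)).add ((Hf0 x hx).mul (Hg3' x hx))).sub
      (((Hg1 x hx).mul (Hf2 x hx)).add ((Hg0 x hx).mul (Hf3' x hx)))
    exact zero_of_deriv hIopen ZW1 hx hd
  linear_combination (-4 : ℝ) * h4 + (7/2 : ℝ) * hZW2

/-- Let `f, g : I → ℝ` be `4` times differentiable functions such that
`D_{f,g}(x,y) = 0` for all `x, y ∈ I`.  Then `W^{0,2}_{f,g} = 0` and `W^{1,3}_{f,g} = 0`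
on `I`, and consequently there exist real constants `α, β` such that
`W^{0,1}_{f,g} = α` and `W^{1,2}_{f,g} = β` on `I`. -/
theorem stmt12 (I : Set ℝ) (hIopen : IsOpen I) (hIconn : I.OrdConnected)
    (hIne : I.Nonempty) (f g : ℝ → ℝ)
    (hf : ∀ k < 4, ∀ x ∈ I, DifferentiableAt ℝ (iteratedDeriv k f) x)
    (hg : ∀ k < 4, ∀ x ∈ I, DifferentiableAt ℝ (iteratedDeriv k g) x)
    (hD : ∀ x ∈ I, ∀ y ∈ I, Dfg f g x y = 0) :
    (∀ x ∈ I, Wfg f g 0 2 x = 0 ∧ Wfg f g 1 3 x = 0) ∧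
      ∃ α β : ℝ, ∀ x ∈ I, Wfg f g 0 1 x = α ∧ Wfg f g 1 2 x = β := by
  have e2 : ∀ h : ℝ → ℝ, iteratedDeriv 2 h = deriv (deriv h) := by
    intro h; rw [iteratedDeriv_succ, iteratedDeriv_one]
  have e3 : ∀ h : ℝ → ℝ, iteratedDeriv 3 h = deriv (deriv (deriv h)) := by
    intro h; rw [iteratedDeriv_succ, e2]
  have Hf0 : ∀ z ∈ I, HasDerivAt f (deriv f z) z := fun z hz => by
    have := hf 0 (by norm_num) z hz; rw [iteratedDeriv_zero] at this; exact this.hasDerivAt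
  have Hf1 : ∀ z ∈ I, HasDerivAt (deriv f) (deriv (deriv f) z) z := fun z hz => by
    have := hf 1 (by norm_num) z hz; rw [iteratedDeriv_one] at this; exact this.hasDerivAt
  have Hf2 : ∀ z ∈ I, HasDerivAt (deriv (deriv f)) (deriv (deriv (deriv f)) z) z :=
    fun z hz => by
      have := hf 2 (by norm_num) z hz; rw [e2] at this; exact this.hasDerivAt
  have Hf3 : ∀ z ∈ I, DifferentiableAt ℝ (deriv (deriv (deriv f))) z := fun z hz => by
    have := hf 3 (by norm_num) z hz; rwa [e3] at this
  have Hg0 : ∀ z ∈ I, HasDerivAt g (deriv g z) z := fun z hz => by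
    have := hg 0 (by norm_num) z hz; rw [iteratedDeriv_zero] at this; exact this.hasDerivAt
  have Hg1 : ∀ z ∈ I, HasDerivAt (deriv g) (deriv (deriv g) z) z := fun z hz => by
    have := hg 1 (by norm_num) z hz; rw [iteratedDeriv_one] at this; exact this.hasDerivAt
  have Hg2 : ∀ z ∈ I, HasDerivAt (deriv (deriv g)) (deriv (deriv (deriv g)) z) z :=
    fun z hz => by
      have := hg 2 (by norm_num) z hz; rw [e2] at this; exact this.hasDerivAt
  have Hg3 : ∀ z ∈ I, DifferentiableAt ℝ (deriv (deriv (deriv g))) z := fun z hz => by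
    have := hg 3 (by norm_num) z hz; rwa [e3] at this
  obtain ⟨hW02, hW13⟩ := aux_main I hIopen f (deriv f) (deriv (deriv f))
    (deriv (deriv (deriv f))) g (deriv g) (deriv (deriv g)) (deriv (deriv (deriv g)))
    Hf0 Hf1 Hf2 Hf3 Hg0 Hg1 Hg2 Hg3 (fun x hx y hy => hD x hx y hy)
  have W02eq : ∀ x, Wfg f g 0 2 x = f x * deriv (deriv g) x - g x * deriv (deriv f) x := by
    intro x; rw [Wfg, e2, e2, iteratedDeriv_zero, iteratedDeriv_zero]
  have W13eq : ∀ x, Wfg f g 1 3 x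
      = deriv f x * deriv (deriv (deriv g)) x - deriv g x * deriv (deriv (deriv f)) x := by
    intro x; rw [Wfg, e3, e3, iteratedDeriv_one, iteratedDeriv_one]
  have W01eq : ∀ x, Wfg f g 0 1 x = f x * deriv g x - g x * deriv f x := by
    intro x; rw [Wfg, iteratedDeriv_one, iteratedDeriv_one, iteratedDeriv_zero,
      iteratedDeriv_zero]
  have W12eq : ∀ x, Wfg f g 1 2 x
      = deriv f x * deriv (deriv g) x - deriv g x * deriv (deriv f) x := by
    intro x; rw [Wfg, e2, e2, iteratedDeriv_one, iteratedDeriv_one]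
  refine ⟨fun x hx => ⟨by rw [W02eq]; exact hW02 x hx, by rw [W13eq]; exact hW13 x hx⟩, ?_⟩
  -- constancy of the lower Wronskians
  have hconv : Convex ℝ I := convex_iff_ordConnected.mpr hIconn
  have hu : ∀ z ∈ I, HasDerivAt (fun z => f z * deriv g z - g z * deriv f z) 0 z := by
    intro z hz
    have hd := ((Hf0 z hz).mul (Hg1 z hz)).sub ((Hg0 z hz).mul (Hf1 z hz))
    exact hd.congr_deriv (by linear_combination hW02 z hz)
  have hv : ∀ z ∈ I, HasDerivAt
      (fun z => deriv f z * deriv (deriv g) z - deriv g z * deriv (deriv f) z) 0 z := by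
    intro z hz
    have hd := ((Hf1 z hz).mul (Hg2 z hz)).sub ((Hg1 z hz).mul (Hf2 z hz))
    exact hd.congr_deriv (by linear_combination hW13 z hz)
  have hconst : ∀ u : ℝ → ℝ, (∀ z ∈ I, HasDerivAt u 0 z) → ∀ x ∈ I, ∀ y ∈ I, u x = u y := by
    intro u hu x hx y hy
    refine hconv.is_const_of_fderivWithin_eq_zero
      (fun z hz => ((hu z hz).differentiableAt).differentiableWithinAt) ?_ hx hy
    intro z hz
    rw [fderivWithin_of_isOpen hIopen hz]
    have h0 : ContinuousLinearMap.smulRight (1 : ℝ →L[ℝ] ℝ) (0 : ℝ) = 0 := by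
      ext; simp
    have : HasFDerivAt u (0 : ℝ →L[ℝ] ℝ) z := h0 ▸ (hu z hz).hasFDerivAt
    exact this.fderiv
  obtain ⟨x0, hx0⟩ := hIne
  refine ⟨f x0 * deriv g x0 - g x0 * deriv f x0,
    deriv f x0 * deriv (deriv g) x0 - deriv g x0 * deriv (deriv f) x0, fun x hx => ⟨?_, ?_⟩⟩
  · rw [W01eq]; exact hconst _ hu x hx x0 hx0
  · rw [W12eq]; exact hconst _ hv x hx x0 hx0
end

section
/- Let f, g : I → ℝ be 4 times differentiable functions such that W^{0,1}_{f,g} is not identically zero on I, and suppose D_{f,g}(x,y) = 0 for all x, y ∈ I. Then there exist constants a, b, c, d, γ ∈ ℝ with ad ≠ bc such that f = a·ψ₁ + b·ψ₂ and g = c·ψ₁ + d·ψ₂ on I, where: if γ < 0 then ψ₁(x) = sin(√(−γ)·x) and ψ₂(x) = cos(√(−γ)·x); if γ = 0 then ψ₁(x) = x and ψ₂(x) = 1; and if γ > 0 then ψ₁(x) = sinh(√γ·x) and ψ₂(x) = cosh(√γ·x). -/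
open Real Set

lemma constOn {I : Set ℝ} (hconn : I.OrdConnected) {k : ℝ → ℝ}
    (hk : ∀ z ∈ I, HasDerivAt k 0 z) {x y : ℝ} (hx : x ∈ I) (hy : y ∈ I) : k y = k x := by
  have main : ∀ a b : ℝ, a ∈ I → b ∈ I → a ≤ b → k b = k a := by
    intro a b ha hb hab
    exact constant_of_has_deriv_right_zero
      (fun z hz => (hk z (hconn.out ha hb hz)).continuousAt.continuousWithinAt)
      (fun z hz => (hk z (hconn.out ha hb (Ico_subset_Icc_self hz))).hasDerivWithinAt)
      b (right_mem_Icc.2 hab)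
  rcases le_total x y with h | h
  · exact main x y hx hy h
  · exact (main y x hy hx h).symm

lemma stepZero {I : Set ℝ} (hI : IsOpen I) {k : ℝ → ℝ} {d : ℝ} {z : ℝ} (hz : z ∈ I)
    (h : HasDerivAt k d z) (h0 : ∀ w ∈ I, k w = 0) : d = 0 :=
  h.unique ((hasDerivAt_const z 0).congr_of_eventuallyEq
    (Filter.eventually_of_mem (hI.mem_nhds hz) h0))

lemma odeUnique {I : Set ℝ} (hconn : I.OrdConnected) (γ : ℝ) (h h' : ℝ → ℝ)
    (hd1 : ∀ z ∈ I, HasDerivAt h (h' z) z) (hd2 : ∀ z ∈ I, HasDerivAt h' (γ * h z) z)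
    {x₀ : ℝ} (hx₀ : x₀ ∈ I) (h0 : h x₀ = 0) (h0' : h' x₀ = 0) : ∀ z ∈ I, h z = 0 := by
  have hE : ∀ z ∈ I, h' z * h' z - γ * (h z * h z) = 0 := by
    intro z hz
    have hEd : ∀ z ∈ I, HasDerivAt (fun z => h' z * h' z - γ * (h z * h z)) 0 z := by
      intro z hz
      have p := ((hd2 z hz).mul (hd2 z hz)).sub (((hd1 z hz).mul (hd1 z hz)).const_mul γ)
      have e : γ * h z * h' z + h' z * (γ * h z) - γ * (h' z * h z + h z * h' z) = 0 := by ring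
      exact e ▸ p
    have := constOn hconn hEd hx₀ hz
    simpa [h0, h0'] using this
  rcases lt_trichotomy γ 0 with hγ | hγ | hγ
  · intro z hz
    have e := hE z hz
    have : h z * h z = 0 := by nlinarith [mul_self_nonneg (h z), mul_self_nonneg (h' z)]
    exact mul_self_eq_zero.1 this
  · subst hγ
    have hz' : ∀ z ∈ I, h' z = 0 := by
      intro z hz
      have e := hE z hz
      simp only [zero_mul, sub_zero] at e
      exact mul_self_eq_zero.1 e
    intro z hz
    have hc : ∀ z ∈ I, HasDerivAt h 0 z := fun z hz => (hz' z hz) ▸ hd1 z hz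
    rw [constOn hconn hc hx₀ hz, h0]
  · set s := Real.sqrt γ with hsdef
    have hs2 : s * s = γ := Real.mul_self_sqrt hγ.le
    have hu : ∀ z ∈ I, HasDerivAt (fun z => Real.exp (s*z) * (h' z - s * h z)) 0 z := by
      intro z hz
      have hexp : HasDerivAt (fun z : ℝ => Real.exp (s*z)) (Real.exp (s*z) * s) z := by
        simpa [Function.comp_def] using (Real.hasDerivAt_exp (s*z)).comp z ((hasDerivAt_id' z).const_mul s)
      have p := hexp.mul ((hd2 z hz).sub ((hd1 z hz).const_mul s))
      have e : Real.exp (s*z) * s * (h' z - s * h z)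
          + Real.exp (s*z) * (γ * h z - s * h' z) = 0 := by rw [← hs2]; ring
      exact e ▸ p
    have hueq : ∀ z ∈ I, h' z = s * h z := by
      intro z hz
      have hc := constOn hconn hu hx₀ hz
      rw [h0, h0'] at hc
      simp only [mul_zero, sub_zero, mul_eq_zero, Real.exp_ne_zero, false_or] at hc
      linarith
    intro z hz
    have hv : ∀ z ∈ I, HasDerivAt (fun z => Real.exp (-(s*z)) * h z) 0 z := by
      intro z hz
      have hexp : HasDerivAt (fun z : ℝ => Real.exp (-(s*z))) (Real.exp (-(s*z)) * (-s)) z := by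
        simpa [Function.comp_def] using (Real.hasDerivAt_exp (-(s*z))).comp z (((hasDerivAt_id' z).const_mul s).neg)
      have p := hexp.mul (hd1 z hz)
      have e : Real.exp (-(s*z)) * (-s) * h z + Real.exp (-(s*z)) * h' z = 0 := by
        rw [hueq z hz]; ring
      exact e ▸ p
    have hc := constOn hconn hv hx₀ hz
    rw [h0] at hc
    simp only [mul_zero, mul_eq_zero, Real.exp_ne_zero, false_or] at hc
    exact hc

lemma chainT {I : Set ℝ} (hconn : I.OrdConnected) (u v : ℝ → ℝ)
    (HU : ∀ k < 4, ∀ z ∈ I, HasDerivAt (iteratedDeriv k u) (iteratedDeriv (k+1) u z) z)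
    (HV : ∀ k < 4, ∀ z ∈ I, HasDerivAt (iteratedDeriv k v) (iteratedDeriv (k+1) v z) z)
    {x y : ℝ} (hx : x ∈ I) (hy : y ∈ I) :
    HasDerivAt (fun y => iteratedDeriv 0 u ((x+y)/2) * (v x + v y))
      (iteratedDeriv 1 u ((x+y)/2) * (1/2) * (v x + v y)
        + iteratedDeriv 0 u ((x+y)/2) * iteratedDeriv 1 v y) y ∧
    HasDerivAt (fun y => iteratedDeriv 1 u ((x+y)/2) * (1/2) * (v x + v y)
        + iteratedDeriv 0 u ((x+y)/2) * iteratedDeriv 1 v y)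
      ((iteratedDeriv 2 u ((x+y)/2) * (1/2) * (1/2) * (v x + v y)
          + iteratedDeriv 1 u ((x+y)/2) * (1/2) * iteratedDeriv 1 v y)
        + (iteratedDeriv 1 u ((x+y)/2) * (1/2) * iteratedDeriv 1 v y
          + iteratedDeriv 0 u ((x+y)/2) * iteratedDeriv 2 v y)) y ∧
    HasDerivAt (fun y => (iteratedDeriv 2 u ((x+y)/2) * (1/2) * (1/2) * (v x + v y)
          + iteratedDeriv 1 u ((x+y)/2) * (1/2) * iteratedDeriv 1 v y)
        + (iteratedDeriv 1 u ((x+y)/2) * (1/2) * iteratedDeriv 1 v y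
          + iteratedDeriv 0 u ((x+y)/2) * iteratedDeriv 2 v y))
      (((iteratedDeriv 3 u ((x+y)/2) * (1/2) * (1/2) * (1/2) * (v x + v y)
          + iteratedDeriv 2 u ((x+y)/2) * (1/2) * (1/2) * iteratedDeriv 1 v y)
        + (iteratedDeriv 2 u ((x+y)/2) * (1/2) * (1/2) * iteratedDeriv 1 v y
          + iteratedDeriv 1 u ((x+y)/2) * (1/2) * iteratedDeriv 2 v y))
       + ((iteratedDeriv 2 u ((x+y)/2) * (1/2) * (1/2) * iteratedDeriv 1 v y
          + iteratedDeriv 1 u ((x+y)/2) * (1/2) * iteratedDeriv 2 v y)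
        + (iteratedDeriv 1 u ((x+y)/2) * (1/2) * iteratedDeriv 2 v y
          + iteratedDeriv 0 u ((x+y)/2) * iteratedDeriv 3 v y))) y ∧
    HasDerivAt (fun y => ((iteratedDeriv 3 u ((x+y)/2) * (1/2) * (1/2) * (1/2) * (v x + v y)
          + iteratedDeriv 2 u ((x+y)/2) * (1/2) * (1/2) * iteratedDeriv 1 v y)
        + (iteratedDeriv 2 u ((x+y)/2) * (1/2) * (1/2) * iteratedDeriv 1 v y
          + iteratedDeriv 1 u ((x+y)/2) * (1/2) * iteratedDeriv 2 v y))
       + ((iteratedDeriv 2 u ((x+y)/2) * (1/2) * (1/2) * iteratedDeriv 1 v y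
          + iteratedDeriv 1 u ((x+y)/2) * (1/2) * iteratedDeriv 2 v y)
        + (iteratedDeriv 1 u ((x+y)/2) * (1/2) * iteratedDeriv 2 v y
          + iteratedDeriv 0 u ((x+y)/2) * iteratedDeriv 3 v y)))
      ((((iteratedDeriv 4 u ((x+y)/2) * (1/2) * (1/2) * (1/2) * (1/2) * (v x + v y)
          + iteratedDeriv 3 u ((x+y)/2) * (1/2) * (1/2) * (1/2) * iteratedDeriv 1 v y)
        + (iteratedDeriv 3 u ((x+y)/2) * (1/2) * (1/2) * (1/2) * iteratedDeriv 1 v y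
          + iteratedDeriv 2 u ((x+y)/2) * (1/2) * (1/2) * iteratedDeriv 2 v y))
       + ((iteratedDeriv 3 u ((x+y)/2) * (1/2) * (1/2) * (1/2) * iteratedDeriv 1 v y
          + iteratedDeriv 2 u ((x+y)/2) * (1/2) * (1/2) * iteratedDeriv 2 v y)
        + (iteratedDeriv 2 u ((x+y)/2) * (1/2) * (1/2) * iteratedDeriv 2 v y
          + iteratedDeriv 1 u ((x+y)/2) * (1/2) * iteratedDeriv 3 v y)))
      + (((iteratedDeriv 3 u ((x+y)/2) * (1/2) * (1/2) * (1/2) * iteratedDeriv 1 v y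
          + iteratedDeriv 2 u ((x+y)/2) * (1/2) * (1/2) * iteratedDeriv 2 v y)
        + (iteratedDeriv 2 u ((x+y)/2) * (1/2) * (1/2) * iteratedDeriv 2 v y
          + iteratedDeriv 1 u ((x+y)/2) * (1/2) * iteratedDeriv 3 v y))
       + ((iteratedDeriv 2 u ((x+y)/2) * (1/2) * (1/2) * iteratedDeriv 2 v y
          + iteratedDeriv 1 u ((x+y)/2) * (1/2) * iteratedDeriv 3 v y)
        + (iteratedDeriv 1 u ((x+y)/2) * (1/2) * iteratedDeriv 3 v y
          + iteratedDeriv 0 u ((x+y)/2) * iteratedDeriv 4 v y)))) y := by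
  have hm : (x+y)/2 ∈ I := by
    rcases le_total x y with h | h
    · exact hconn.out hx hy ⟨by linarith, by linarith⟩
    · exact hconn.out hy hx ⟨by linarith, by linarith⟩
  have hmid : HasDerivAt (fun y : ℝ => (x + y)/2) ((1:ℝ)/2) y := by
    simpa using ((hasDerivAt_id y).const_add x).div_const 2
  have hA : ∀ k, k < 4 → HasDerivAt (fun y : ℝ => iteratedDeriv k u ((x+y)/2))
      (iteratedDeriv (k+1) u ((x+y)/2) * (1/2)) y := fun k hk => by
    simpa [Function.comp_def] using (HU k hk _ hm).comp y hmid
  have hB : ∀ k, k < 4 → HasDerivAt (fun y : ℝ => iteratedDeriv k v y)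
      (iteratedDeriv (k+1) v y) y := fun k hk => HV k hk y hy
  have hVx : HasDerivAt (fun y => v x + v y) (iteratedDeriv 1 v y) y := by
    simpa [iteratedDeriv_zero] using ((HV 0 (by norm_num) y hy).const_add (v x))
  refine ⟨(hA 0 (by norm_num)).mul hVx, ?_, ?_, ?_⟩
  · exact (((hA 1 (by norm_num)).mul_const (1/2)).mul hVx).add
      ((hA 0 (by norm_num)).mul (hB 1 (by norm_num)))
  · exact (((((hA 2 (by norm_num)).mul_const (1/2)).mul_const (1/2)).mul hVx).add
        (((hA 1 (by norm_num)).mul_const (1/2)).mul (hB 1 (by norm_num)))).add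
      ((((hA 1 (by norm_num)).mul_const (1/2)).mul (hB 1 (by norm_num))).add
        ((hA 0 (by norm_num)).mul (hB 2 (by norm_num))))
  · exact ((((((hA 3 (by norm_num)).mul_const (1/2)).mul_const (1/2)).mul_const (1/2)).mul hVx).add
        ((((hA 2 (by norm_num)).mul_const (1/2)).mul_const (1/2)).mul (hB 1 (by norm_num))) |>.add
      (((((hA 2 (by norm_num)).mul_const (1/2)).mul_const (1/2)).mul (hB 1 (by norm_num))).add
        (((hA 1 (by norm_num)).mul_const (1/2)).mul (hB 2 (by norm_num))))).add
      ((((((hA 2 (by norm_num)).mul_const (1/2)).mul_const (1/2)).mul (hB 1 (by norm_num))).add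
        (((hA 1 (by norm_num)).mul_const (1/2)).mul (hB 2 (by norm_num)))).add
       ((((hA 1 (by norm_num)).mul_const (1/2)).mul (hB 2 (by norm_num))).add
        ((hA 0 (by norm_num)).mul (hB 3 (by norm_num)))))

lemma trigRepr {I : Set ℝ} (hconn : I.OrdConnected) {γ s : ℝ} (hs2 : s * s = -γ) (hs : s ≠ 0)
    (u u1 : ℝ → ℝ) (hd1 : ∀ z ∈ I, HasDerivAt u (u1 z) z)
    (hd2 : ∀ z ∈ I, HasDerivAt u1 (γ * u z) z) {x₀ : ℝ} (hx₀ : x₀ ∈ I) : ∀ z ∈ I,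
    u z = (u x₀ * Real.sin (s*x₀) + u1 x₀ * Real.cos (s*x₀) / s) * Real.sin (s*z)
        + (u x₀ * Real.cos (s*x₀) - u1 x₀ * Real.sin (s*x₀) / s) * Real.cos (s*z) := by
  set a := u x₀ * Real.sin (s*x₀) + u1 x₀ * Real.cos (s*x₀) / s with ha
  set b := u x₀ * Real.cos (s*x₀) - u1 x₀ * Real.sin (s*x₀) / s with hb
  have hsin : ∀ z : ℝ, HasDerivAt (fun z => Real.sin (s*z)) (Real.cos (s*z) * s) z := fun z => by
    simpa [Function.comp_def] using (Real.hasDerivAt_sin (s*z)).comp z ((hasDerivAt_id' z).const_mul s)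
  have hcos : ∀ z : ℝ, HasDerivAt (fun z => Real.cos (s*z)) (-Real.sin (s*z) * s) z := fun z => by
    simpa [Function.comp_def] using (Real.hasDerivAt_cos (s*z)).comp z ((hasDerivAt_id' z).const_mul s)
  have hp := Real.sin_sq_add_cos_sq (s*x₀)
  have main := odeUnique hconn γ
    (fun z => u z - (a * Real.sin (s*z) + b * Real.cos (s*z)))
    (fun z => u1 z - (a * (Real.cos (s*z) * s) + b * (-Real.sin (s*z) * s)))
    (fun z hz => (hd1 z hz).sub (((hsin z).const_mul a).add ((hcos z).const_mul b)))
    (fun z hz => by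
      have p := (hd2 z hz).sub ((((hcos z).mul_const s).const_mul a).add
        (((hsin z).neg.mul_const s).const_mul b))
      have e : γ * u z - (a * (-Real.sin (s*z) * s * s) + b * (-(Real.cos (s*z) * s) * s))
          = γ * (u z - (a * Real.sin (s*z) + b * Real.cos (s*z))) := by
        linear_combination (a * Real.sin (s*z) + b * Real.cos (s*z)) * hs2
      exact e ▸ p)
    hx₀
    (by rw [ha, hb]; field_simp; linear_combination (-(u x₀ * s)) * hp)
    (by rw [ha, hb]; field_simp; linear_combination (-(u1 x₀)) * hp)
  intro z hz
  exact sub_eq_zero.mp (by simpa using main z hz)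

lemma coshRepr {I : Set ℝ} (hconn : I.OrdConnected) {γ s : ℝ} (hs2 : s * s = γ) (hs : s ≠ 0)
    (u u1 : ℝ → ℝ) (hd1 : ∀ z ∈ I, HasDerivAt u (u1 z) z)
    (hd2 : ∀ z ∈ I, HasDerivAt u1 (γ * u z) z) {x₀ : ℝ} (hx₀ : x₀ ∈ I) : ∀ z ∈ I,
    u z = (u1 x₀ * Real.cosh (s*x₀) / s - u x₀ * Real.sinh (s*x₀)) * Real.sinh (s*z)
        + (u x₀ * Real.cosh (s*x₀) - u1 x₀ * Real.sinh (s*x₀) / s) * Real.cosh (s*z) := by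
  set a := u1 x₀ * Real.cosh (s*x₀) / s - u x₀ * Real.sinh (s*x₀) with ha
  set b := u x₀ * Real.cosh (s*x₀) - u1 x₀ * Real.sinh (s*x₀) / s with hb
  have hsinh : ∀ z : ℝ, HasDerivAt (fun z => Real.sinh (s*z)) (Real.cosh (s*z) * s) z := fun z => by
    simpa [Function.comp_def] using (Real.hasDerivAt_sinh (s*z)).comp z ((hasDerivAt_id' z).const_mul s)
  have hcosh : ∀ z : ℝ, HasDerivAt (fun z => Real.cosh (s*z)) (Real.sinh (s*z) * s) z := fun z => by
    simpa [Function.comp_def] using (Real.hasDerivAt_cosh (s*z)).comp z ((hasDerivAt_id' z).const_mul s)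
  have hp := Real.cosh_sq_sub_sinh_sq (s*x₀)
  have main := odeUnique hconn γ
    (fun z => u z - (a * Real.sinh (s*z) + b * Real.cosh (s*z)))
    (fun z => u1 z - (a * (Real.cosh (s*z) * s) + b * (Real.sinh (s*z) * s)))
    (fun z hz => (hd1 z hz).sub (((hsinh z).const_mul a).add ((hcosh z).const_mul b)))
    (fun z hz => by
      have p := (hd2 z hz).sub ((((hcosh z).mul_const s).const_mul a).add
        (((hsinh z).mul_const s).const_mul b))
      have e : γ * u z - (a * (Real.sinh (s*z) * s * s) + b * (Real.cosh (s*z) * s * s))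
          = γ * (u z - (a * Real.sinh (s*z) + b * Real.cosh (s*z))) := by
        linear_combination (-(a * Real.sinh (s*z) + b * Real.cosh (s*z))) * hs2
      exact e ▸ p)
    hx₀
    (by rw [ha, hb]; field_simp; linear_combination (-(u x₀ * s)) * hp)
    (by rw [ha, hb]; field_simp; linear_combination (-(u1 x₀)) * hp)
  intro z hz
  exact sub_eq_zero.mp (by simpa using main z hz)

lemma linRepr {I : Set ℝ} (hconn : I.OrdConnected)
    (u u1 : ℝ → ℝ) (hd1 : ∀ z ∈ I, HasDerivAt u (u1 z) z)
    (hd2 : ∀ z ∈ I, HasDerivAt u1 0 z) {x₀ : ℝ} (hx₀ : x₀ ∈ I) : ∀ z ∈ I,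
    u z = u1 x₀ * z + (u x₀ - u1 x₀ * x₀) := by
  have hu1 : ∀ z ∈ I, u1 z = u1 x₀ := fun z hz => constOn hconn hd2 hx₀ hz
  have hlin : ∀ z : ℝ, HasDerivAt (fun z : ℝ => u1 x₀ * z + (u x₀ - u1 x₀ * x₀)) (u1 x₀) z :=
    fun z => by simpa using ((hasDerivAt_id' z).const_mul (u1 x₀)).add_const (u x₀ - u1 x₀ * x₀)
  have hh : ∀ z ∈ I, HasDerivAt (fun z => u z - (u1 x₀ * z + (u x₀ - u1 x₀ * x₀))) 0 z := by
    intro z hz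
    have p := (hd1 z hz).sub (hlin z)
    have e : u1 z - u1 x₀ = 0 := by rw [hu1 z hz]; ring
    exact e ▸ p
  intro z hz
  have := constOn hconn hh hx₀ hz
  have h2 : u x₀ - (u1 x₀ * x₀ + (u x₀ - u1 x₀ * x₀)) = 0 := by ring
  rw [h2] at this
  linarith [this]




/-- Let `f, g : I → ℝ` be `4` times differentiable functions such that
`W^{0,1}_{f,g}` is not identically zero on `I`, and suppose `D_{f,g}(x,y) = 0` for all
`x, y ∈ I`.  Then there exist constants `a, b, c, d, γ ∈ ℝ` with `ad ≠ bc` such that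
`f = a·ψ₁ + b·ψ₂` and `g = c·ψ₁ + d·ψ₂` on `I`, where: if `γ < 0` then
`ψ₁(x) = sin(√(−γ)x)`, `ψ₂(x) = cos(√(−γ)x)`; if `γ = 0` then `ψ₁(x) = x`, `ψ₂(x) = 1`;
and if `γ > 0` then `ψ₁(x) = sinh(√γ x)`, `ψ₂(x) = cosh(√γ x)`. -/
theorem stmt13 (I : Set ℝ) (hIopen : IsOpen I) (hIconn : I.OrdConnected)
    (hIne : I.Nonempty) (f g : ℝ → ℝ)
    (hf : ∀ k < 4, ∀ x ∈ I, DifferentiableAt ℝ (iteratedDeriv k f) x)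
    (hg : ∀ k < 4, ∀ x ∈ I, DifferentiableAt ℝ (iteratedDeriv k g) x)
    (hW : ∃ x ∈ I, Wfg f g 0 1 x ≠ 0)
    (hD : ∀ x ∈ I, ∀ y ∈ I, Dfg f g x y = 0) :
    ∃ a b c d γ : ℝ, a * d ≠ b * c ∧
      ((γ < 0 ∧ ∀ x ∈ I,
          f x = a * Real.sin (Real.sqrt (-γ) * x) + b * Real.cos (Real.sqrt (-γ) * x) ∧
          g x = c * Real.sin (Real.sqrt (-γ) * x) + d * Real.cos (Real.sqrt (-γ) * x)) ∨
        (γ = 0 ∧ ∀ x ∈ I, f x = a * x + b ∧ g x = c * x + d) ∨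
        (0 < γ ∧ ∀ x ∈ I,
          f x = a * Real.sinh (Real.sqrt γ * x) + b * Real.cosh (Real.sqrt γ * x) ∧
          g x = c * Real.sinh (Real.sqrt γ * x) + d * Real.cosh (Real.sqrt γ * x))) := by
  classical
  obtain ⟨x₀, hx₀, hwne⟩ := hW
  have HF : ∀ k < 4, ∀ z ∈ I, HasDerivAt (iteratedDeriv k f) (iteratedDeriv (k+1) f z) z := by
    intro k hk z hz; rw [iteratedDeriv_succ]; exact (hf k hk z hz).hasDerivAt
  have HG : ∀ k < 4, ∀ z ∈ I, HasDerivAt (iteratedDeriv k g) (iteratedDeriv (k+1) g z) z := by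
    intro k hk z hz; rw [iteratedDeriv_succ]; exact (hg k hk z hz).hasDerivAt
  have HF0 : ∀ z ∈ I, HasDerivAt f (iteratedDeriv 1 f z) z := by
    intro z hz; simpa [iteratedDeriv_zero] using HF 0 (by norm_num) z hz
  have HG0 : ∀ z ∈ I, HasDerivAt g (iteratedDeriv 1 g z) z := by
    intro z hz; simpa [iteratedDeriv_zero] using HG 0 (by norm_num) z hz
  -- key pointwise relations from the functional equation
  have key : ∀ x ∈ I,
      f x * iteratedDeriv 2 g x = g x * iteratedDeriv 2 f x ∧
      7*(f x * iteratedDeriv 4 g x - g x * iteratedDeriv 4 f x)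
        + 12*(iteratedDeriv 1 f x * iteratedDeriv 3 g x
            - iteratedDeriv 1 g x * iteratedDeriv 3 f x) = 0 := by
    intro x hx
    have C1 := fun (y:ℝ) (hy : y ∈ I) => chainT hIconn f g HF HG hx hy
    have C2 := fun (y:ℝ) (hy : y ∈ I) => chainT hIconn g f HG HF hx hy
    have z0 : ∀ y ∈ I, iteratedDeriv 0 f ((x+y)/2) * (g x + g y)
        - iteratedDeriv 0 g ((x+y)/2) * (f x + f y) = 0 := by
      intro y hy; simpa [iteratedDeriv_zero, Dfg] using hD x hx y hy
    have z1 := fun (y:ℝ) (hy : y ∈ I) =>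
      stepZero hIopen hy (((C1 y hy).1).sub ((C2 y hy).1)) z0
    have z2 := fun (y:ℝ) (hy : y ∈ I) =>
      stepZero hIopen hy (((C1 y hy).2.1).sub ((C2 y hy).2.1)) z1
    have z3 := fun (y:ℝ) (hy : y ∈ I) =>
      stepZero hIopen hy (((C1 y hy).2.2.1).sub ((C2 y hy).2.2.1)) z2
    have z4 := fun (y:ℝ) (hy : y ∈ I) =>
      stepZero hIopen hy (((C1 y hy).2.2.2).sub ((C2 y hy).2.2.2)) z3
    have e2 := z2 x hx
    have e4 := z4 x hx
    rw [show (x+x)/2 = x by ring] at e2 e4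
    simp only [iteratedDeriv_zero] at e2 e4
    constructor
    · linear_combination 2 * e2
    · linear_combination 8 * e4
  have R2 : ∀ z ∈ I, f z * iteratedDeriv 2 g z = g z * iteratedDeriv 2 f z :=
    fun z hz => (key z hz).1
  -- second cascade: differentiate R2 twice
  have q1 := fun (z:ℝ) (hz : z ∈ I) =>
    stepZero hIopen hz
      (((HF0 z hz).mul (HG 2 (by norm_num) z hz)).sub
        ((HG0 z hz).mul (HF 2 (by norm_num) z hz)))
      (fun w hw => sub_eq_zero_of_eq (R2 w hw))
  have q2 := fun (z:ℝ) (hz : z ∈ I) =>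
    stepZero hIopen hz
      ((((HF 1 (by norm_num) z hz).mul (HG 2 (by norm_num) z hz)).add
          ((HF0 z hz).mul (HG 3 (by norm_num) z hz))).sub
       (((HG 1 (by norm_num) z hz).mul (HF 2 (by norm_num) z hz)).add
          ((HG0 z hz).mul (HF 3 (by norm_num) z hz))))
      q1
  have Q3 : ∀ z ∈ I, iteratedDeriv 1 f z * iteratedDeriv 3 g z
      = iteratedDeriv 1 g z * iteratedDeriv 3 f z := by
    intro z hz
    linear_combination (7/2) * q2 z hz - (1/2) * (key z hz).2
  -- Wronskian is constant
  have pW : ∀ z ∈ I, HasDerivAt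
      (fun z => f z * iteratedDeriv 1 g z - g z * iteratedDeriv 1 f z) 0 z := by
    intro z hz
    have p := ((HF0 z hz).mul (HG 1 (by norm_num) z hz)).sub
      ((HG0 z hz).mul (HF 1 (by norm_num) z hz))
    have e : iteratedDeriv 1 f z * iteratedDeriv 1 g z + f z * iteratedDeriv 2 g z
        - (iteratedDeriv 1 g z * iteratedDeriv 1 f z + g z * iteratedDeriv 2 f z) = 0 := by
      linear_combination R2 z hz
    exact e ▸ p
  set w := f x₀ * iteratedDeriv 1 g x₀ - g x₀ * iteratedDeriv 1 f x₀ with hwdef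
  have Wconst : ∀ z ∈ I, f z * iteratedDeriv 1 g z - g z * iteratedDeriv 1 f z = w :=
    fun z hz => constOn hIconn pW hx₀ hz
  have hw0 : w ≠ 0 := by
    simpa [Wfg, iteratedDeriv_zero, hwdef] using hwne
  -- numerator is constant
  have pN : ∀ z ∈ I, HasDerivAt
      (fun z => iteratedDeriv 2 f z * iteratedDeriv 1 g z
        - iteratedDeriv 1 f z * iteratedDeriv 2 g z) 0 z := by
    intro z hz
    have p := ((HF 2 (by norm_num) z hz).mul (HG 1 (by norm_num) z hz)).sub
      ((HF 1 (by norm_num) z hz).mul (HG 2 (by norm_num) z hz))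
    have e : iteratedDeriv 3 f z * iteratedDeriv 1 g z
        + iteratedDeriv 2 f z * iteratedDeriv 2 g z
        - (iteratedDeriv 2 f z * iteratedDeriv 2 g z
          + iteratedDeriv 1 f z * iteratedDeriv 3 g z) = 0 := by
      linear_combination - Q3 z hz
    exact e ▸ p
  set c₀ := iteratedDeriv 2 f x₀ * iteratedDeriv 1 g x₀
    - iteratedDeriv 1 f x₀ * iteratedDeriv 2 g x₀ with hc₀def
  have Nconst : ∀ z ∈ I, iteratedDeriv 2 f z * iteratedDeriv 1 g z
      - iteratedDeriv 1 f z * iteratedDeriv 2 g z = c₀ :=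
    fun z hz => constOn hIconn pN hx₀ hz
  set γ := c₀ / w with hγdef
  have F2rel : ∀ z ∈ I, iteratedDeriv 2 f z = γ * f z := by
    intro z hz
    rw [hγdef, div_mul_eq_mul_div, eq_div_iff hw0]
    linear_combination (- iteratedDeriv 2 f z) * Wconst z hz + f z * Nconst z hz
      + iteratedDeriv 1 f z * R2 z hz
  have G2rel : ∀ z ∈ I, iteratedDeriv 2 g z = γ * g z := by
    intro z hz
    rw [hγdef, div_mul_eq_mul_div, eq_div_iff hw0]
    linear_combination (- iteratedDeriv 2 g z) * Wconst z hz + g z * Nconst z hz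
      + iteratedDeriv 1 g z * R2 z hz
  have HF1 : ∀ z ∈ I, HasDerivAt (iteratedDeriv 1 f) (γ * f z) z :=
    fun z hz => (F2rel z hz) ▸ HF 1 (by norm_num) z hz
  have HG1 : ∀ z ∈ I, HasDerivAt (iteratedDeriv 1 g) (γ * g z) z :=
    fun z hz => (G2rel z hz) ▸ HG 1 (by norm_num) z hz
  rcases lt_trichotomy γ 0 with hγ | hγ | hγ
  · -- γ < 0 : trigonometric case
    have hneg : (0:ℝ) < -γ := by linarith
    have hs2 : Real.sqrt (-γ) * Real.sqrt (-γ) = -γ := Real.mul_self_sqrt hneg.le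
    have hs : Real.sqrt (-γ) ≠ 0 := ne_of_gt (Real.sqrt_pos.2 hneg)
    have Ff := trigRepr hIconn hs2 hs f (iteratedDeriv 1 f) HF0 HF1 hx₀
    have Gg := trigRepr hIconn hs2 hs g (iteratedDeriv 1 g) HG0 HG1 hx₀
    refine ⟨f x₀ * Real.sin (Real.sqrt (-γ)*x₀) + iteratedDeriv 1 f x₀ * Real.cos (Real.sqrt (-γ)*x₀) / Real.sqrt (-γ),
      f x₀ * Real.cos (Real.sqrt (-γ)*x₀) - iteratedDeriv 1 f x₀ * Real.sin (Real.sqrt (-γ)*x₀) / Real.sqrt (-γ),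
      g x₀ * Real.sin (Real.sqrt (-γ)*x₀) + iteratedDeriv 1 g x₀ * Real.cos (Real.sqrt (-γ)*x₀) / Real.sqrt (-γ),
      g x₀ * Real.cos (Real.sqrt (-γ)*x₀) - iteratedDeriv 1 g x₀ * Real.sin (Real.sqrt (-γ)*x₀) / Real.sqrt (-γ),
      γ, ?_, Or.inl ⟨hγ, fun z hz => ⟨Ff z hz, Gg z hz⟩⟩⟩
    have hp := Real.sin_sq_add_cos_sq (Real.sqrt (-γ)*x₀)
    have key2 : (f x₀ * Real.sin (Real.sqrt (-γ)*x₀) + iteratedDeriv 1 f x₀ * Real.cos (Real.sqrt (-γ)*x₀) / Real.sqrt (-γ)) *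
        (g x₀ * Real.cos (Real.sqrt (-γ)*x₀) - iteratedDeriv 1 g x₀ * Real.sin (Real.sqrt (-γ)*x₀) / Real.sqrt (-γ)) -
        (f x₀ * Real.cos (Real.sqrt (-γ)*x₀) - iteratedDeriv 1 f x₀ * Real.sin (Real.sqrt (-γ)*x₀) / Real.sqrt (-γ)) *
        (g x₀ * Real.sin (Real.sqrt (-γ)*x₀) + iteratedDeriv 1 g x₀ * Real.cos (Real.sqrt (-γ)*x₀) / Real.sqrt (-γ))
        = (iteratedDeriv 1 f x₀ * g x₀ - f x₀ * iteratedDeriv 1 g x₀) / Real.sqrt (-γ) := by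
      linear_combination ((iteratedDeriv 1 f x₀ * g x₀ - f x₀ * iteratedDeriv 1 g x₀) / Real.sqrt (-γ)) * hp
    intro hc
    apply hw0
    have h0 : (iteratedDeriv 1 f x₀ * g x₀ - f x₀ * iteratedDeriv 1 g x₀) / Real.sqrt (-γ) = 0 := by
      rw [← key2, hc, sub_self]
    have h1 := (div_eq_zero_iff.mp h0).resolve_right hs
    rw [hwdef]
    linear_combination - h1
  · -- γ = 0 : linear case
    have HF1z : ∀ z ∈ I, HasDerivAt (iteratedDeriv 1 f) 0 z := fun z hz => by
      simpa [hγ] using HF1 z hz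
    have HG1z : ∀ z ∈ I, HasDerivAt (iteratedDeriv 1 g) 0 z := fun z hz => by
      simpa [hγ] using HG1 z hz
    have Ff := linRepr hIconn f (iteratedDeriv 1 f) HF0 HF1z hx₀
    have Gg := linRepr hIconn g (iteratedDeriv 1 g) HG0 HG1z hx₀
    refine ⟨iteratedDeriv 1 f x₀, f x₀ - iteratedDeriv 1 f x₀ * x₀,
      iteratedDeriv 1 g x₀, g x₀ - iteratedDeriv 1 g x₀ * x₀,
      γ, ?_, Or.inr (Or.inl ⟨hγ, fun z hz => ⟨Ff z hz, Gg z hz⟩⟩)⟩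
    intro hc
    apply hw0
    rw [hwdef]
    linear_combination - hc
  · -- 0 < γ : hyperbolic case
    have hs2 : Real.sqrt γ * Real.sqrt γ = γ := Real.mul_self_sqrt hγ.le
    have hs : Real.sqrt γ ≠ 0 := ne_of_gt (Real.sqrt_pos.2 hγ)
    have Ff := coshRepr hIconn hs2 hs f (iteratedDeriv 1 f) HF0 HF1 hx₀
    have Gg := coshRepr hIconn hs2 hs g (iteratedDeriv 1 g) HG0 HG1 hx₀
    refine ⟨iteratedDeriv 1 f x₀ * Real.cosh (Real.sqrt γ*x₀) / Real.sqrt γ - f x₀ * Real.sinh (Real.sqrt γ*x₀),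
      f x₀ * Real.cosh (Real.sqrt γ*x₀) - iteratedDeriv 1 f x₀ * Real.sinh (Real.sqrt γ*x₀) / Real.sqrt γ,
      iteratedDeriv 1 g x₀ * Real.cosh (Real.sqrt γ*x₀) / Real.sqrt γ - g x₀ * Real.sinh (Real.sqrt γ*x₀),
      g x₀ * Real.cosh (Real.sqrt γ*x₀) - iteratedDeriv 1 g x₀ * Real.sinh (Real.sqrt γ*x₀) / Real.sqrt γ,
      γ, ?_, Or.inr (Or.inr ⟨hγ, fun z hz => ⟨Ff z hz, Gg z hz⟩⟩)⟩
    have hp := Real.cosh_sq_sub_sinh_sq (Real.sqrt γ*x₀)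
    have key2 : (iteratedDeriv 1 f x₀ * Real.cosh (Real.sqrt γ*x₀) / Real.sqrt γ - f x₀ * Real.sinh (Real.sqrt γ*x₀)) *
        (g x₀ * Real.cosh (Real.sqrt γ*x₀) - iteratedDeriv 1 g x₀ * Real.sinh (Real.sqrt γ*x₀) / Real.sqrt γ) -
        (f x₀ * Real.cosh (Real.sqrt γ*x₀) - iteratedDeriv 1 f x₀ * Real.sinh (Real.sqrt γ*x₀) / Real.sqrt γ) *
        (iteratedDeriv 1 g x₀ * Real.cosh (Real.sqrt γ*x₀) / Real.sqrt γ - g x₀ * Real.sinh (Real.sqrt γ*x₀))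
        = (iteratedDeriv 1 f x₀ * g x₀ - f x₀ * iteratedDeriv 1 g x₀) / Real.sqrt γ := by
      linear_combination ((iteratedDeriv 1 f x₀ * g x₀ - f x₀ * iteratedDeriv 1 g x₀) / Real.sqrt γ) * hp
    intro hc
    apply hw0
    have h0 : (iteratedDeriv 1 f x₀ * g x₀ - f x₀ * iteratedDeriv 1 g x₀) / Real.sqrt γ = 0 := by
      rw [← key2, hc, sub_self]
    have h1 := (div_eq_zero_iff.mp h0).resolve_right hs
    rw [hwdef]
    linear_combination - h1
end

section
/- Let J ⊆ ℝ be a nonempty open interval, h : J → ℝ a continuous strictly monotone function, and set I := 2h(J), ℓ(x) := g(h⁻¹(x/2)) for x ∈ I, and G₀ := G − G(0). If (g, h, F, G, H) solves G(g(u)−g(v)) = H(h(u)+h(v)) + F(u) + F(v) for all u, v ∈ J, then the functions ℓ, H : I → ℝ and G₀ : ℓ(I)−ℓ(I) → ℝ solve G₀(ℓ(x)−ℓ(y)) = H((x+y)/2) − (H(x)+H(y))/2 for all x, y ∈ I, and moreover F(u) = ½(G(0) − H(2h(u))) for all u ∈ J. -/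
/-- Let `J ⊆ ℝ` be a nonempty open interval, `h : J → ℝ` a continuous
strictly monotone function, and set `I := 2h(J)`, `ℓ(x) := g(h⁻¹(x/2))` for `x ∈ I`, and
`G₀ := G − G(0)`.  If `(g, h, F, G, H)` solves
`G(g(u)−g(v)) = H(h(u)+h(v)) + F(u) + F(v)` for all `u, v ∈ J`, then
`G₀(ℓ(x)−ℓ(y)) = H((x+y)/2) − (H(x)+H(y))/2` for all `x, y ∈ I`, and moreover
`F(u) = ½(G(0) − H(2h(u)))` for all `u ∈ J`.
(The inverse of `h` is formalized by a function `hinv` that is a left inverse of `h` on `J`.) -/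
theorem stmt16 (J : Set ℝ) (hJopen : IsOpen J) (hJconn : J.OrdConnected)
    (hJne : J.Nonempty) (g h F G H : ℝ → ℝ)
    (hcont : ContinuousOn h J)
    (hmono : StrictMonoOn h J ∨ StrictAntiOn h J)
    (hinv : ℝ → ℝ)
    (hinv_left : ∀ u ∈ J, hinv (h u) = u)
    (heq : ∀ u ∈ J, ∀ v ∈ J, G (g u - g v) = H (h u + h v) + F u + F v) :
    (∀ x ∈ (fun t => 2 * t) '' (h '' J), ∀ y ∈ (fun t => 2 * t) '' (h '' J),
        G (g (hinv (x / 2)) - g (hinv (y / 2))) - G 0 =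
          H ((x + y) / 2) - (H x + H y) / 2) ∧
      ∀ u ∈ J, F u = (G 0 - H (2 * h u)) / 2 := by
  have hF : ∀ u ∈ J, F u = (G 0 - H (2 * h u)) / 2 := by
    intro u hu
    have := heq u hu u hu
    simp only [sub_self] at this
    have : G 0 = H (2 * h u) + F u + F u := by rw [this]; ring_nf
    linarith
  refine ⟨?_, hF⟩
  rintro x ⟨-, ⟨u, hu, rfl⟩, rfl⟩ y ⟨-, ⟨v, hv, rfl⟩, rfl⟩
  have hx : 2 * h u / 2 = h u := by ring
  have hy : 2 * h v / 2 = h v := by ring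
  rw [hx, hy, hinv_left u hu, hinv_left v hv, heq u hu v hv, hF u hu, hF v hv]
  have : (2 * h u + 2 * h v) / 2 = h u + h v := by ring
  rw [this]
  ring
end

section
/- Assume ℓ, H : I → ℝ and G₀ : ℓ(I)−ℓ(I) → ℝ are differentiable functions satisfying G₀(ℓ(x)−ℓ(y)) = H((x+y)/2) − (H(x)+H(y))/2 for all x, y ∈ I, and suppose ℓ' does not vanish on I. Then the pair of functions (φ, f) given by φ := H' and f := 1/ℓ' solves the functional equation φ((x+y)/2)(f(x)+f(y)) = φ(x)f(x) + φ(y)f(y) for all x, y ∈ I. -/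
/-- Assume `ℓ, H : I → ℝ` and `G₀ : ℓ(I)−ℓ(I) → ℝ` are differentiable
functions satisfying `G₀(ℓ(x)−ℓ(y)) = H((x+y)/2) − (H(x)+H(y))/2` for all `x, y ∈ I`, and
suppose `ℓ'` does not vanish on `I`.  Then the pair `(φ, f)` given by `φ := H'` and
`f := 1/ℓ'` solves the functional equation
`φ((x+y)/2)(f(x)+f(y)) = φ(x)f(x) + φ(y)f(y)` for all `x, y ∈ I`. -/
theorem stmt18 (I : Set ℝ) (hIopen : IsOpen I) (hIconn : I.OrdConnected)
    (hIne : I.Nonempty) (ℓ H G₀ : ℝ → ℝ)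
    (hℓ : ∀ x ∈ I, DifferentiableAt ℝ ℓ x)
    (hH : ∀ x ∈ I, DifferentiableAt ℝ H x)
    (hG₀ : ∀ t : ℝ, (∃ x ∈ I, ∃ y ∈ I, t = ℓ x - ℓ y) → DifferentiableAt ℝ G₀ t)
    (hℓ' : ∀ x ∈ I, deriv ℓ x ≠ 0)
    (heq : ∀ x ∈ I, ∀ y ∈ I,
      G₀ (ℓ x - ℓ y) = H ((x + y) / 2) - (H x + H y) / 2) :
    ∀ x ∈ I, ∀ y ∈ I,
      deriv H ((x + y) / 2) * (1 / deriv ℓ x + 1 / deriv ℓ y) =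
        deriv H x * (1 / deriv ℓ x) + deriv H y * (1 / deriv ℓ y) := by
  -- midpoints are in I
  have hmid : ∀ x ∈ I, ∀ y ∈ I, (x + y) / 2 ∈ I := by
    intro x hx y hy
    rcases le_total x y with h | h
    · exact hIconn.out hx hy ⟨by linarith, by linarith⟩
    · exact hIconn.out hy hx ⟨by linarith, by linarith⟩
  intro x hx y hy
  set m := (x + y) / 2 with hm_def
  have hm : m ∈ I := hmid x hx y hy
  set t := ℓ x - ℓ y with ht_def
  have hGt : DifferentiableAt ℝ G₀ t := hG₀ t ⟨x, hx, y, hy, rfl⟩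
  set g := deriv G₀ t with hg_def
  -- derivative in x
  have hL1 : HasDerivAt (fun u => G₀ (ℓ u - ℓ y)) (g * deriv ℓ x) x := by
    have h1 : HasDerivAt (fun u => ℓ u - ℓ y) (deriv ℓ x) x :=
      ((hℓ x hx).hasDerivAt).sub_const (ℓ y)
    exact (hGt.hasDerivAt.comp x h1)
  have hR1 : HasDerivAt (fun u => H ((u + y) / 2) - (H u + H y) / 2)
      (deriv H m * (1 / 2) - deriv H x / 2) x := by
    have hmu : HasDerivAt (fun u : ℝ => (u + y) / 2) (1 / 2) x := by
      have := ((hasDerivAt_id x).add_const y).div_const 2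
      simpa using this
    have h1 : HasDerivAt (fun u => H ((u + y) / 2)) (deriv H m * (1 / 2)) x :=
      (hH m hm).hasDerivAt.comp x hmu
    have h2 : HasDerivAt (fun u => (H u + H y) / 2) (deriv H x / 2) x :=
      (((hH x hx).hasDerivAt).add_const (H y)).div_const 2
    exact h1.sub h2
  have hEq1 : g * deriv ℓ x = deriv H m * (1 / 2) - deriv H x / 2 := by
    have hev : (fun u => G₀ (ℓ u - ℓ y)) =ᶠ[nhds x]
        (fun u => H ((u + y) / 2) - (H u + H y) / 2) := by
      filter_upwards [hIopen.mem_nhds hx] with u hu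
      exact heq u hu y hy
    have := hL1.deriv
    rw [hev.deriv_eq, hR1.deriv] at this
    exact this.symm
  -- derivative in y
  have hL2 : HasDerivAt (fun v => G₀ (ℓ x - ℓ v)) (g * (-deriv ℓ y)) y := by
    have h1 : HasDerivAt (fun v => ℓ x - ℓ v) (-deriv ℓ y) y :=
      ((hℓ y hy).hasDerivAt).const_sub (ℓ x)
    exact (hGt.hasDerivAt.comp y h1)
  have hR2 : HasDerivAt (fun v => H ((x + v) / 2) - (H x + H v) / 2)
      (deriv H m * (1 / 2) - deriv H y / 2) y := by
    have hmu : HasDerivAt (fun v : ℝ => (x + v) / 2) (1 / 2) y := by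
      have := ((hasDerivAt_id y).const_add x).div_const 2
      simpa using this
    have h1 : HasDerivAt (fun v => H ((x + v) / 2)) (deriv H m * (1 / 2)) y :=
      (hH m hm).hasDerivAt.comp y hmu
    have h2 : HasDerivAt (fun v => (H x + H v) / 2) (deriv H y / 2) y :=
      (((hH y hy).hasDerivAt).const_add (H x)).div_const 2
    exact h1.sub h2
  have hEq2 : g * (-deriv ℓ y) = deriv H m * (1 / 2) - deriv H y / 2 := by
    have hev : (fun v => G₀ (ℓ x - ℓ v)) =ᶠ[nhds y]
        (fun v => H ((x + v) / 2) - (H x + H v) / 2) := by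
      filter_upwards [hIopen.mem_nhds hy] with v hv
      exact heq x hx v hv
    have := hL2.deriv
    rw [hev.deriv_eq, hR2.deriv] at this
    exact this.symm
  have ha := hℓ' x hx
  have hb := hℓ' y hy
  field_simp
  linear_combination (-2) * deriv ℓ y * hEq1 + (-2) * deriv ℓ x * hEq2
end
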